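/- arXiv:2506.16140 — 4 statements merged into one kernel-verified Lean document; each statement's English description precedes it below -/
import Mathlib

section
/- Let k ≥ 2, ℓ ≥ 1, r ≥ 2 be integers and n ≡ k-1 (mod ℓ), with n ≥ k-1+ℓ. Let H* be the r-uniform hypergraph on n vertices obtained by taking a set A* of k-1 vertices, partitioning the remaining n-k+1 vertices into classes of size ℓ, and taking all r-subsets of A* ∪ X for each class X. Then H* contains no Berge copy of T_ℓ ∪ (k-1)S_ℓ for any tree T_ℓ with ℓ edges; that is, one cannot find k pairwise vertex-disjoint skeletons (one a tree with ℓ edges, the others stars with ℓ edges) realized by distinct hyperedges of H*. -/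
open Finset

/-- A Berge copy of the graph `F` in the hypergraph `H`: an injective embedding of the
vertices of `F` together with an injective assignment of distinct hyperedges to the
edges of `F`, each hyperedge containing (the images of) both endpoints of its edge. -/
def IsBergeCopy {α V : Type*} (F : SimpleGraph α) (H : Finset (Finset V)) : Prop :=
  ∃ (f : α → V) (φ : Sym2 α → Finset V),
    Function.Injective f ∧ Set.InjOn φ F.edgeSet ∧
    ∀ e ∈ F.edgeSet, φ e ∈ H ∧ ∀ x ∈ e, f x ∈ φ e

/-- The Turán number `ex_r(n, Berge-F)`: the maximum number of hyperedges in an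
`n`-vertex `r`-uniform hypergraph with no Berge copy of `F`. -/
noncomputable def exBerge {α : Type*} (r n : ℕ) (F : SimpleGraph α) : ℕ :=
  sSup {m | ∃ H : Finset (Finset (Fin n)),
    (∀ e ∈ H, e.card = r) ∧ ¬ IsBergeCopy F H ∧ H.card = m}

/-- The path with `ℓ` edges, on `ℓ+1` vertices. -/
def pathG (ℓ : ℕ) : SimpleGraph (Fin (ℓ + 1)) :=
  SimpleGraph.fromRel (fun x y => (x : ℕ) + 1 = (y : ℕ))

/-- `c` vertex-disjoint stars, each with `ℓ` edges (centers are the vertices `(i, 0)`). -/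
def starsG (c ℓ : ℕ) : SimpleGraph (Fin c × Fin (ℓ + 1)) :=
  SimpleGraph.fromRel (fun x y => x.1 = y.1 ∧ x.2 = 0)

/-- A matching with `t` edges. -/
def matchingG (t : ℕ) : SimpleGraph (Fin t × Fin 2) :=
  SimpleGraph.fromRel (fun x y => x.1 = y.1)

/-- Vertex-disjoint union of `k` paths, the `i`-th having `ℓ i` edges. -/
def pathsG (k : ℕ) (ℓ : Fin k → ℕ) : SimpleGraph (Σ i : Fin k, Fin (ℓ i + 1)) :=
  SimpleGraph.fromRel (fun x y => x.1 = y.1 ∧ (x.2 : ℕ) + 1 = (y.2 : ℕ))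

/-- A hypergraph is connected if every two vertices are joined by a walk of hyperedges
(equivalently, lie on a common Berge path). -/
def HyperConnected {V : Type*} (H : Finset (Finset V)) : Prop :=
  ∀ u v : V, Relation.ReflTransGen (fun a b => ∃ e ∈ H, a ∈ e ∧ b ∈ e) u v

/-- The connected Turán number `ex^con_r(n, Berge-F)`. -/
noncomputable def exConBerge {α : Type*} (r n : ℕ) (F : SimpleGraph α) : ℕ :=
  sSup {m | ∃ H : Finset (Finset (Fin n)),
    (∀ e ∈ H, e.card = r) ∧ HyperConnected H ∧ ¬ IsBergeCopy F H ∧ H.card = m}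

lemma key_comp {n ℓ m : ℕ} (X : Fin m → Finset (Fin n)) (hX : ∀ i, (X i).card = ℓ)
    (hXX : ∀ i j, i ≠ j → Disjoint (X i) (X j)) (A : Finset (Fin n))
    {β : Type*} [Fintype β] [DecidableEq β] (G : SimpleGraph β) (hconn : G.Connected)
    (hcard : Fintype.card β = ℓ + 1) (hl : 1 ≤ ℓ)
    (f : β → Fin n) (hf : Function.Injective f)
    (hedge : ∀ u v, G.Adj u v → ∃ i, f u ∈ A ∪ X i ∧ f v ∈ A ∪ X i) :
    ∃ v, f v ∈ A := by
  by_contra hcon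
  push_neg at hcon
  have hadj : ∀ u v, G.Adj u v → ∃ i, f u ∈ X i ∧ f v ∈ X i := by
    intro u v huv
    obtain ⟨i, hu, hv⟩ := hedge u v huv
    exact ⟨i, (Finset.mem_union.1 hu).resolve_left (hcon u),
      (Finset.mem_union.1 hv).resolve_left (hcon v)⟩
  have hpos : 0 < Fintype.card β := by omega
  obtain ⟨v₀⟩ := Fintype.card_pos_iff.mp hpos
  have hex : ∃ w, G.Adj v₀ w := by
    obtain ⟨w, hw⟩ := Fintype.exists_ne_of_one_lt_card (by omega) v₀
    obtain ⟨p⟩ := hconn.preconnected v₀ w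
    cases p with
    | nil => exact absurd rfl hw
    | cons h _ => exact ⟨_, h⟩
  obtain ⟨w₀, hw₀⟩ := hex
  obtain ⟨i₀, hv₀i, _⟩ := hadj v₀ w₀ hw₀
  have step : ∀ (a b : β) (p : G.Walk a b), f a ∈ X i₀ → f b ∈ X i₀ := by
    intro a b p
    induction p with
    | nil => exact id
    | cons h p ih =>
        intro ha
        obtain ⟨i, hu, hv⟩ := hadj _ _ h
        have hii : i = i₀ := by
          by_contra hne
          exact Finset.disjoint_left.mp (hXX i i₀ hne) hu ha
        exact ih (hii ▸ hv)
  have hall : ∀ v, f v ∈ X i₀ := fun v => step v₀ v (hconn.preconnected v₀ v).some hv₀i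
  have hsub : (univ.image f : Finset (Fin n)) ⊆ X i₀ := by
    intro x hx
    obtain ⟨v, _, rfl⟩ := Finset.mem_image.1 hx
    exact hall v
  have := Finset.card_le_card hsub
  rw [Finset.card_image_of_injective _ hf, Finset.card_univ, hcard, hX i₀] at this
  omega

theorem Hstar_bergeFree (k ℓ r m n : ℕ) (hk : 2 ≤ k) (hl : 1 ≤ ℓ) (hr : 2 ≤ r)
    (hm : 1 ≤ m) (hn : n = k - 1 + ℓ * m)
    (A : Finset (Fin n)) (hA : A.card = k - 1)
    (X : Fin m → Finset (Fin n)) (hX : ∀ i, (X i).card = ℓ)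
    (hXA : ∀ i, Disjoint A (X i))
    (hXX : ∀ i j, i ≠ j → Disjoint (X i) (X j))
    (Hstar : Finset (Finset (Fin n)))
    (hHstar : ∀ e, e ∈ Hstar ↔ e.card = r ∧ ∃ i, e ⊆ A ∪ X i) :
    ∀ T : SimpleGraph (Fin (ℓ + 1)), T.IsTree →
      ¬ IsBergeCopy (T.sum (starsG (k - 1) ℓ)) Hstar := by
  rintro T hT ⟨f, φ, hf, hφ, hE⟩
  -- edge images land in some A ∪ X i
  have hmem : ∀ (u v : Fin (ℓ+1) ⊕ (Fin (k-1) × Fin (ℓ+1))),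
      (T.sum (starsG (k-1) ℓ)).Adj u v → ∃ i, f u ∈ A ∪ X i ∧ f v ∈ A ∪ X i := by
    intro u v huv
    have he : s(u, v) ∈ (T.sum (starsG (k-1) ℓ)).edgeSet := huv
    obtain ⟨hH, hin⟩ := hE _ he
    obtain ⟨-, i, hsub⟩ := (hHstar _).1 hH
    exact ⟨i, hsub (hin u (Sym2.mem_mk_left u v)), hsub (hin v (Sym2.mem_mk_right u v))⟩
  -- the tree component contributes a vertex mapped into A
  obtain ⟨vT, hvT⟩ := key_comp X hX hXX A T hT.isConnected (by simp) hl
    (fun a => f (Sum.inl a)) (fun a b hab => Sum.inl_injective (hf hab))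
    (fun u v huv => hmem _ _ (by exact huv))
  -- the star
  set S : SimpleGraph (Fin (ℓ+1)) := SimpleGraph.fromRel (fun x _ => x = 0) with hS
  have hSadj : ∀ x : Fin (ℓ+1), x ≠ 0 → S.Adj x 0 := by
    intro x hx
    rw [hS, SimpleGraph.fromRel_adj]
    exact ⟨hx, Or.inr rfl⟩
  have hSconn : S.Connected := by
    rw [SimpleGraph.connected_iff]
    refine ⟨fun u v => ?_, ⟨0⟩⟩
    have h0 : ∀ x : Fin (ℓ+1), S.Reachable x 0 := by
      intro x
      by_cases hx : x = 0
      · exact hx ▸ SimpleGraph.Reachable.refl x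
      · exact (hSadj x hx).reachable
    exact (h0 u).trans (h0 v).symm
  have hstar : ∀ j : Fin (k-1), ∃ b, f (Sum.inr (j, b)) ∈ A := by
    intro j
    refine key_comp X hX hXX A S hSconn (by simp) hl
      (fun b => f (Sum.inr (j, b)))
      (fun a b hab => by
        have := hf hab
        simpa using this)
      (fun u v huv => hmem _ _ ?_)
    rw [hS, SimpleGraph.fromRel_adj] at huv
    obtain ⟨hne, hc⟩ := huv
    show (starsG (k-1) ℓ).Adj (j, u) (j, v)
    rw [starsG, SimpleGraph.fromRel_adj]
    refine ⟨by simp [Prod.ext_iff, hne], ?_⟩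
    rcases hc with h | h
    · exact Or.inl ⟨rfl, h⟩
    · exact Or.inr ⟨rfl, h⟩
  choose v hv using hstar
  -- counting: k distinct elements of A
  classical
  have himg : ((univ : Finset (Fin (k-1))).image (fun j => f (Sum.inr (j, v j)))).card
      = k - 1 := by
    rw [Finset.card_image_of_injective _ (fun a b hab => by
      have := hf hab
      simpa using (congrArg Prod.fst (Sum.inr_injective this)))]
    simp
  have hnotmem : f (Sum.inl vT) ∉
      (univ : Finset (Fin (k-1))).image (fun j => f (Sum.inr (j, v j))) := by
    intro hcontr
    obtain ⟨j, -, hj⟩ := Finset.mem_image.1 hcontr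
    exact absurd (hf hj) (by simp)
  have hsub : insert (f (Sum.inl vT))
      ((univ : Finset (Fin (k-1))).image (fun j => f (Sum.inr (j, v j)))) ⊆ A := by
    intro x hx
    rcases Finset.mem_insert.1 hx with rfl | hx
    · exact hvT
    · obtain ⟨j, -, rfl⟩ := Finset.mem_image.1 hx
      exact hv j
  have := Finset.card_le_card hsub
  rw [Finset.card_insert_of_notMem hnotmem, himg, hA] at this
  omega
end

section
/- Let k ≥ 2, 2 ≤ r ≤ k, and 1 ≤ t ≤ k be integers. For sufficiently large n, the maximum number of hyperedges in an n-vertex r-uniform hypergraph containing no Berge copy of M_t ∪ (k-t)S_2 equals C(k-1, r-1)(n-k+1) + C(k-1, r). -/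
open Finset

open Sum

abbrev FG (t u : ℕ) := (matchingG t).sum (starsG u 2)

lemma matchingG_adj {t : ℕ} {a b : Fin t × Fin 2} :
    (matchingG t).Adj a b ↔ a ≠ b ∧ a.1 = b.1 := by
  unfold matchingG
  rw [SimpleGraph.fromRel_adj]
  constructor
  · rintro ⟨h1, h2 | h2⟩
    · exact ⟨h1, h2⟩
    · exact ⟨h1, h2.symm⟩
  · rintro ⟨h1, h2⟩; exact ⟨h1, Or.inl h2⟩

lemma starsG_adj {u ℓ : ℕ} {a b : Fin u × Fin (ℓ+1)} :
    (starsG u ℓ).Adj a b ↔ a ≠ b ∧ a.1 = b.1 ∧ (a.2 = 0 ∨ b.2 = 0) := by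
  unfold starsG
  rw [SimpleGraph.fromRel_adj]
  constructor
  · rintro ⟨h1, ⟨h2, h3⟩ | ⟨h2, h3⟩⟩
    · exact ⟨h1, h2, Or.inl h3⟩
    · exact ⟨h1, h2.symm, Or.inr h3⟩
  · rintro ⟨h1, h2, h3 | h3⟩
    · exact ⟨h1, Or.inl ⟨h2, h3⟩⟩
    · exact ⟨h1, Or.inr ⟨h2.symm, h3⟩⟩

lemma sum_adj_inl_inl {α β : Type*} {G : SimpleGraph α} {G' : SimpleGraph β} {a b : α} :
    (G.sum G').Adj (inl a) (inl b) ↔ G.Adj a b := Iff.rfl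

lemma sum_adj_inr_inr {α β : Type*} {G : SimpleGraph α} {G' : SimpleGraph β} {a b : β} :
    (G.sum G').Adj (inr a) (inr b) ↔ G'.Adj a b := Iff.rfl

lemma sum_adj_inl_inr {α β : Type*} {G : SimpleGraph α} {G' : SimpleGraph β} {a : α} {b : β} :
    ¬ (G.sum G').Adj (inl a) (inr b) := fun h => by simp [SimpleGraph.sum] at h

lemma sum_adj_inr_inl {α β : Type*} {G : SimpleGraph α} {G' : SimpleGraph β} {a : β} {b : α} :
    ¬ (G.sum G').Adj (inr a) (inl b) := fun h => by simp [SimpleGraph.sum] at h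

lemma fin2_cases {c d : Fin 2} (h : c ≠ d) : (c = 0 ∧ d = 1) ∨ (c = 1 ∧ d = 0) := by
  fin_cases c <;> fin_cases d <;> simp_all

lemma fin3_cases {c d : Fin 3} (h : c ≠ d) (h0 : c = 0 ∨ d = 0) :
    (c = 0 ∧ d = 1) ∨ (c = 1 ∧ d = 0) ∨ (c = 0 ∧ d = 2) ∨ (c = 2 ∧ d = 0) := by
  fin_cases c <;> fin_cases d <;> simp_all

lemma FG_edge_iff {t u : ℕ} (e : Sym2 ((Fin t × Fin 2) ⊕ (Fin u × Fin 3))) :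
    e ∈ (FG t u).edgeSet ↔
      (∃ i : Fin t, e = s(inl (i,0), inl (i,1))) ∨
      (∃ j : Fin u, e = s(inr (j,0), inr (j,1)) ∨ e = s(inr (j,0), inr (j,2))) := by
  induction e using Sym2.ind with
  | _ a b =>
    rw [SimpleGraph.mem_edgeSet]
    constructor
    · intro h
      match a, b with
      | inl x, inl y =>
        rw [sum_adj_inl_inl, matchingG_adj] at h
        obtain ⟨hne, h1⟩ := h
        obtain ⟨i, c⟩ := x
        obtain ⟨i', d⟩ := y
        simp only at h1
        subst h1
        have hcd : c ≠ d := fun hh => hne (by rw [hh])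
        left
        refine ⟨i, ?_⟩
        rcases fin2_cases hcd with ⟨rfl, rfl⟩ | ⟨rfl, rfl⟩
        · rfl
        · exact Sym2.eq_swap
      | inl x, inr y => exact absurd h sum_adj_inl_inr
      | inr x, inl y => exact absurd h sum_adj_inr_inl
      | inr x, inr y =>
        rw [sum_adj_inr_inr, starsG_adj] at h
        obtain ⟨hne, h1, h0⟩ := h
        obtain ⟨j, c⟩ := x
        obtain ⟨j', d⟩ := y
        simp only at h1 h0
        subst h1
        have hcd : c ≠ d := fun hh => hne (by rw [hh])
        right
        refine ⟨j, ?_⟩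
        rcases fin3_cases hcd h0 with ⟨rfl, rfl⟩ | ⟨rfl, rfl⟩ | ⟨rfl, rfl⟩ | ⟨rfl, rfl⟩
        · exact Or.inl rfl
        · exact Or.inl Sym2.eq_swap
        · exact Or.inr rfl
        · exact Or.inr Sym2.eq_swap
    · rintro (⟨i, he⟩ | ⟨j, he | he⟩) <;>
      · rw [Sym2.eq_iff] at he
        rcases he with ⟨rfl, rfl⟩ | ⟨rfl, rfl⟩ <;>
        · first
          | (rw [sum_adj_inl_inl, matchingG_adj]; exact ⟨by simp, rfl⟩)
          | (rw [sum_adj_inr_inr, starsG_adj]; exact ⟨by simp, rfl, by simp⟩)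

section Blocks
variable {V : Type*} [DecidableEq V]
structure PairBlock (H : Finset (Finset V)) (D : Finset V) (U : Finset (Finset V))
    (p : ℕ) where
  w : Fin p × Fin 2 → V
  E : Fin p → Finset V
  winj : Function.Injective w
  Einj : Function.Injective E
  mem : ∀ i j, w (i, j) ∈ E i
  EH : ∀ i, E i ∈ H
  EU : ∀ i, E i ∉ U
  wD : ∀ i j, w (i, j) ∉ D
structure CherryBlock (H : Finset (Finset V)) (D : Finset V) (U : Finset (Finset V))
    (q : ℕ) where
  w : Fin q × Fin 3 → V
  E : Fin q × Fin 2 → Finset V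
  winj : Function.Injective w
  Einj : Function.Injective E
  mem0 : ∀ j c, w (j, 0) ∈ E (j, c)
  mem1 : ∀ j, w (j, 1) ∈ E (j, 0)
  mem2 : ∀ j, w (j, 2) ∈ E (j, 1)
  EH : ∀ jc, E jc ∈ H
  EU : ∀ jc, E jc ∉ U
  wD : ∀ j c, w (j, c) ∉ D
variable {H : Finset (Finset V)} {D : Finset V} {U : Finset (Finset V)} {p q : ℕ}
def PairBlock.desig (P : PairBlock H D U p) : Finset V := Finset.image P.w univ
def PairBlock.eset (P : PairBlock H D U p) : Finset (Finset V) := Finset.image P.E univ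
def CherryBlock.desig (C : CherryBlock H D U q) : Finset V := Finset.image C.w univ
def CherryBlock.eset (C : CherryBlock H D U q) : Finset (Finset V) := Finset.image C.E univ
lemma PairBlock.mem_desig (P : PairBlock H D U p) (i : Fin p) (j : Fin 2) :
    P.w (i, j) ∈ P.desig := mem_image_of_mem _ (mem_univ _)
lemma PairBlock.mem_eset (P : PairBlock H D U p) (i : Fin p) :
    P.E i ∈ P.eset := mem_image_of_mem _ (mem_univ _)
lemma CherryBlock.mem_desig (C : CherryBlock H D U q) (j : Fin q) (c : Fin 3) :
    C.w (j, c) ∈ C.desig := mem_image_of_mem _ (mem_univ _)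
lemma CherryBlock.mem_eset (C : CherryBlock H D U q) (jc : Fin q × Fin 2) :
    C.E jc ∈ C.eset := mem_image_of_mem _ (mem_univ _)
lemma PairBlock.card_desig (P : PairBlock H D U p) : P.desig.card ≤ 2 * p := by
  calc P.desig.card ≤ (univ : Finset (Fin p × Fin 2)).card := card_image_le
    _ = p * 2 := by simp
    _ = 2 * p := Nat.mul_comm _ _
lemma CherryBlock.card_desig (C : CherryBlock H D U q) : C.desig.card ≤ 3 * q := by
  calc C.desig.card ≤ (univ : Finset (Fin q × Fin 3)).card := card_image_le
    _ = q * 3 := by simp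
    _ = 3 * q := Nat.mul_comm _ _
lemma PairBlock.card_eset (P : PairBlock H D U p) : P.eset.card ≤ p := by
  calc P.eset.card ≤ (univ : Finset (Fin p)).card := card_image_le
    _ = p := by simp
lemma CherryBlock.card_eset (C : CherryBlock H D U q) : C.eset.card ≤ 2 * q := by
  calc C.eset.card ≤ (univ : Finset (Fin q × Fin 2)).card := card_image_le
    _ = q * 2 := by simp
    _ = 2 * q := Nat.mul_comm _ _

end Blocks

section Assembly
variable {V : Type*} [DecidableEq V] {H : Finset (Finset V)} {t u p1 q1 : ℕ}

theorem berge_of_blocks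
    (hp : p1 ≤ t) (hq : q1 ≤ u)
    (P1 : PairBlock H ∅ ∅ p1)
    (C1 : CherryBlock H P1.desig P1.eset q1)
    (P2 : PairBlock H (P1.desig ∪ C1.desig) (P1.eset ∪ C1.eset) (t - p1))
    (C2 : CherryBlock H (P1.desig ∪ C1.desig ∪ P2.desig) (P1.eset ∪ C1.eset ∪ P2.eset)
      (u - q1)) :
    IsBergeCopy (FG t u) H := by
  classical
  -- cross-distinctness of designated vertices
  have vP1C1 : ∀ a b, P1.w a ≠ C1.w b := fun a b h =>
    C1.wD b.1 b.2 (h ▸ P1.mem_desig a.1 a.2)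
  have vP1P2 : ∀ a b, P1.w a ≠ P2.w b := fun a b h =>
    P2.wD b.1 b.2 (mem_union_left _ (h ▸ P1.mem_desig a.1 a.2))
  have vP1C2 : ∀ a b, P1.w a ≠ C2.w b := fun a b h =>
    C2.wD b.1 b.2 (mem_union_left _ (mem_union_left _ (h ▸ P1.mem_desig a.1 a.2)))
  have vC1P2 : ∀ a b, C1.w a ≠ P2.w b := fun a b h =>
    P2.wD b.1 b.2 (mem_union_right _ (h ▸ C1.mem_desig a.1 a.2))
  have vC1C2 : ∀ a b, C1.w a ≠ C2.w b := fun a b h =>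
    C2.wD b.1 b.2 (mem_union_left _ (mem_union_right _ (h ▸ C1.mem_desig a.1 a.2)))
  have vP2C2 : ∀ a b, P2.w a ≠ C2.w b := fun a b h =>
    C2.wD b.1 b.2 (mem_union_right _ (h ▸ P2.mem_desig a.1 a.2))
  -- cross-distinctness of edges
  have eP1C1 : ∀ a b, P1.E a ≠ C1.E b := fun a b h =>
    C1.EU b (h ▸ P1.mem_eset a)
  have eP1P2 : ∀ a b, P1.E a ≠ P2.E b := fun a b h =>
    P2.EU b (mem_union_left _ (h ▸ P1.mem_eset a))
  have eP1C2 : ∀ a b, P1.E a ≠ C2.E b := fun a b h =>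
    C2.EU b (mem_union_left _ (mem_union_left _ (h ▸ P1.mem_eset a)))
  have eC1P2 : ∀ a b, C1.E a ≠ P2.E b := fun a b h =>
    P2.EU b (mem_union_right _ (h ▸ C1.mem_eset a))
  have eC1C2 : ∀ a b, C1.E a ≠ C2.E b := fun a b h =>
    C2.EU b (mem_union_left _ (mem_union_right _ (h ▸ C1.mem_eset a)))
  have eP2C2 : ∀ a b, P2.E a ≠ C2.E b := fun a b h =>
    C2.EU b (mem_union_right _ (h ▸ P2.mem_eset a))
  -- combined functions
  set pw : Fin t × Fin 2 → V := fun x =>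
    if h : (x.1 : ℕ) < p1 then P1.w (⟨x.1, h⟩, x.2)
    else P2.w (⟨(x.1 : ℕ) - p1, by omega⟩, x.2) with hpw
  set pE : Fin t → Finset V := fun i =>
    if h : (i : ℕ) < p1 then P1.E ⟨i, h⟩
    else P2.E ⟨(i : ℕ) - p1, by omega⟩ with hpE
  set cw : Fin u × Fin 3 → V := fun x =>
    if h : (x.1 : ℕ) < q1 then C1.w (⟨x.1, h⟩, x.2)
    else C2.w (⟨(x.1 : ℕ) - q1, by omega⟩, x.2) with hcw
  set cE : Fin u × Fin 2 → Finset V := fun x =>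
    if h : (x.1 : ℕ) < q1 then C1.E (⟨x.1, h⟩, x.2)
    else C2.E (⟨(x.1 : ℕ) - q1, by omega⟩, x.2) with hcE
  -- injectivity of the combined vertex maps
  have pwinj : Function.Injective pw := by
    rintro ⟨i, j⟩ ⟨i', j'⟩ h
    simp only [hpw] at h
    split_ifs at h with h1 h2 h2
    · have := P1.winj h
      simp only [Prod.ext_iff, Fin.ext_iff] at this ⊢
      exact ⟨this.1, this.2⟩
    · exact absurd h (vP1P2 _ _)
    · exact absurd h.symm (vP1P2 _ _)
    · have := P2.winj h
      simp only [Prod.ext_iff, Fin.ext_iff] at this ⊢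
      refine ⟨by omega, this.2⟩
  have cwinj : Function.Injective cw := by
    rintro ⟨i, j⟩ ⟨i', j'⟩ h
    simp only [hcw] at h
    split_ifs at h with h1 h2 h2
    · have := C1.winj h
      simp only [Prod.ext_iff, Fin.ext_iff] at this ⊢
      exact ⟨this.1, this.2⟩
    · exact absurd h (vC1C2 _ _)
    · exact absurd h.symm (vC1C2 _ _)
    · have := C2.winj h
      simp only [Prod.ext_iff, Fin.ext_iff] at this ⊢
      refine ⟨by omega, this.2⟩
  have pwcw : ∀ a b, pw a ≠ cw b := by
    rintro ⟨i, j⟩ ⟨i', j'⟩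
    simp only [hpw, hcw]
    split_ifs with h1 h2 h2
    · exact vP1C1 _ _
    · exact vP1C2 _ _
    · exact fun h => (vC1P2 _ _) h.symm
    · exact vP2C2 _ _
  have pEinj : Function.Injective pE := by
    intro i i' h
    simp only [hpE] at h
    split_ifs at h with h1 h2 h2
    · have := P1.Einj h
      simp only [Fin.ext_iff] at this ⊢
      exact this
    · exact absurd h (eP1P2 _ _)
    · exact absurd h.symm (eP1P2 _ _)
    · have := P2.Einj h
      simp only [Fin.ext_iff] at this ⊢
      omega
  have cEinj : Function.Injective cE := by
    rintro ⟨i, j⟩ ⟨i', j'⟩ h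
    simp only [hcE] at h
    split_ifs at h with h1 h2 h2
    · have := C1.Einj h
      simp only [Prod.ext_iff, Fin.ext_iff] at this ⊢
      exact ⟨this.1, this.2⟩
    · exact absurd h (eC1C2 _ _)
    · exact absurd h.symm (eC1C2 _ _)
    · have := C2.Einj h
      simp only [Prod.ext_iff, Fin.ext_iff] at this ⊢
      refine ⟨by omega, this.2⟩
  have pEcE : ∀ a b, pE a ≠ cE b := by
    rintro i ⟨i', j'⟩
    simp only [hpE, hcE]
    split_ifs with h1 h2 h2
    · exact eP1C1 _ _
    · exact eP1C2 _ _
    · exact fun h => (eC1P2 _ _) h.symm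
    · exact eP2C2 _ _
  -- memberships
  have hmemp : ∀ (i : Fin t) (j : Fin 2), pw (i, j) ∈ pE i := by
    intro i j
    simp only [hpw, hpE]
    split_ifs with h1
    · exact P1.mem _ _
    · exact P2.mem _ _
  have hmemc0 : ∀ (j : Fin u) (c : Fin 2), cw (j, 0) ∈ cE (j, c) := by
    intro j c
    simp only [hcw, hcE]
    split_ifs with h1
    · exact C1.mem0 _ _
    · exact C2.mem0 _ _
  have hmemc1 : ∀ (j : Fin u), cw (j, 1) ∈ cE (j, 0) := by
    intro j
    simp only [hcw, hcE]
    split_ifs with h1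
    · exact C1.mem1 _
    · exact C2.mem1 _
  have hmemc2 : ∀ (j : Fin u), cw (j, 2) ∈ cE (j, 1) := by
    intro j
    simp only [hcw, hcE]
    split_ifs with h1
    · exact C1.mem2 _
    · exact C2.mem2 _
  have hpEH : ∀ i, pE i ∈ H := by
    intro i
    simp only [hpE]
    split_ifs with h1
    · exact P1.EH _
    · exact P2.EH _
  have hcEH : ∀ jc, cE jc ∈ H := by
    intro jc
    simp only [hcE]
    split_ifs with h1
    · exact C1.EH _
    · exact C2.EH _
  -- the vertex map
  set fmap : (Fin t × Fin 2) ⊕ (Fin u × Fin 3) → V :=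
    (fun x => match x with | inl a => pw a | inr b => cw b) with hfmap
  set gfun : ((Fin t × Fin 2) ⊕ (Fin u × Fin 3)) → ((Fin t × Fin 2) ⊕ (Fin u × Fin 3)) →
      Finset V :=
    (fun x y => match x, y with
      | inl a, inl b => pE (min a.1 b.1)
      | inl a, inr _ => pE a.1
      | inr _, inl b => pE b.1
      | inr a, inr b => cE (min a.1 b.1, if max a.2 b.2 ≤ 1 then 0 else 1)) with hgfun
  have gsymm : ∀ x y, gfun x y = gfun y x := by
    rintro (a | a) (b | b) <;> simp only [hgfun]
    · rw [min_comm]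
    · rw [min_comm, max_comm]
  set φ : Sym2 ((Fin t × Fin 2) ⊕ (Fin u × Fin 3)) → Finset V :=
    Sym2.lift ⟨gfun, gsymm⟩ with hφ
  have comp1 : ∀ i : Fin t, φ s(inl (i, (0:Fin 2)), inl (i, (1:Fin 2))) = pE i := by
    intro i
    rw [hφ, Sym2.lift_mk]
    show pE (min i i) = pE i
    rw [min_self]
  have comp2 : ∀ j : Fin u, φ s(inr (j, (0:Fin 3)), inr (j, (1:Fin 3))) = cE (j, 0) := by
    intro j
    rw [hφ, Sym2.lift_mk]
    show cE (min j j, if max (0:Fin 3) 1 ≤ 1 then 0 else 1) = cE (j, 0)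
    rw [min_self]
    norm_num
  have comp3 : ∀ j : Fin u, φ s(inr (j, (0:Fin 3)), inr (j, (2:Fin 3))) = cE (j, 1) := by
    intro j
    rw [hφ, Sym2.lift_mk]
    show cE (min j j, if max (0:Fin 3) 2 ≤ 1 then 0 else 1) = cE (j, 1)
    rw [min_self]
    have : ¬ (max (0:Fin 3) 2 ≤ 1) := by decide
    rw [if_neg this]
  have finj : Function.Injective fmap := by
    rintro (a | a) (b | b) h
    · exact congrArg inl (pwinj h)
    · exact absurd h (pwcw _ _)
    · exact absurd h.symm (pwcw _ _)
    · exact congrArg inr (cwinj h)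
  have injon : Set.InjOn φ (FG t u).edgeSet := by
    intro e1 he1 e2 he2 h
    replace he1 := (FG_edge_iff e1).mp he1
    replace he2 := (FG_edge_iff e2).mp he2
    rcases he1 with ⟨i, rfl⟩ | ⟨j, he1 | he1⟩ <;>
      rcases he2 with ⟨i', rfl⟩ | ⟨j', he2 | he2⟩ <;>
      subst_vars <;>
      simp only [comp1, comp2, comp3] at h
    · rw [pEinj h]
    · exact absurd h (pEcE _ _)
    · exact absurd h (pEcE _ _)
    · exact absurd h.symm (pEcE _ _)
    · have := cEinj h
      simp only [Prod.ext_iff] at this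
      rw [this.1]
    · have := cEinj h
      simp only [Prod.ext_iff] at this
      exact absurd this.2 (by decide)
    · exact absurd h.symm (pEcE _ _)
    · have := cEinj h
      simp only [Prod.ext_iff] at this
      exact absurd this.2 (by decide)
    · have := cEinj h
      simp only [Prod.ext_iff] at this
      rw [this.1]
  refine ⟨fmap, φ, finj, injon, ?_⟩
  intro e he
  replace he := (FG_edge_iff e).mp he
  rcases he with ⟨i, rfl⟩ | ⟨j, he | he⟩
  · rw [comp1]
    refine ⟨hpEH i, ?_⟩
    intro x hx
    rw [Sym2.mem_iff] at hx
    rcases hx with rfl | rfl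
    · exact hmemp i 0
    · exact hmemp i 1
  · subst he
    rw [comp2]
    refine ⟨hcEH (j, 0), ?_⟩
    intro x hx
    rw [Sym2.mem_iff] at hx
    rcases hx with rfl | rfl
    · exact hmemc0 j 0
    · exact hmemc1 j
  · subst he
    rw [comp3]
    refine ⟨hcEH (j, 1), ?_⟩
    intro x hx
    rw [Sym2.mem_iff] at hx
    rcases hx with rfl | rfl
    · exact hmemc0 j 1
    · exact hmemc2 j

end Assembly

section Deg
variable {V : Type*} [DecidableEq V]

/-- degree of a vertex in a hypergraph -/
def degH (H : Finset (Finset V)) (v : V) : ℕ := (H.filter (fun e => v ∈ e)).card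

lemma card_le_of_subset_powerset {A : Finset (Finset V)} {W : Finset V}
    (h : ∀ e ∈ A, e ⊆ W) : A.card ≤ 2 ^ W.card := by
  calc A.card ≤ W.powerset.card := card_le_card (fun e he => mem_powerset.mpr (h e he))
    _ = 2 ^ W.card := card_powerset W

/-- The host lemma: a vertex of large degree supports a cherry avoiding any small
designated set `D` and any small used-edge set `U`. -/
lemma host_cherry (H : Finset (Finset V)) (v : V) (D : Finset V) (U : Finset (Finset V))
    (hdeg : 2 ^ (D.card + 3) + U.card + 2 ≤ degH H v) :
    ∃ e1, e1 ∈ H ∧ ∃ e2, e2 ∈ H ∧ e1 ∉ U ∧ e2 ∉ U ∧ e1 ≠ e2 ∧ v ∈ e1 ∧ v ∈ e2 ∧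
      ∃ x, x ∈ e1 ∧ x ∉ D ∧ x ≠ v ∧ ∃ z, z ∈ e2 ∧ z ∉ D ∧ z ≠ v ∧ z ≠ x := by
  classical
  set A := (H.filter (fun e => v ∈ e)) \ U with hA
  have hAcard : 2 ^ (D.card + 3) + 2 ≤ A.card := by
    have h1 : degH H v ≤ A.card + U.card := by
      have := card_le_card_sdiff_add_card (s := (H.filter (fun e => v ∈ e))) (t := U)
      exact this
    omega
  -- first edge
  have h1 : ∃ e1 ∈ A, ¬ e1 ⊆ insert v D := by
    by_contra hcon
    push_neg at hcon
    have hle : A.card ≤ 2 ^ (insert v D).card := card_le_of_subset_powerset hcon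
    have h2 : (insert v D).card ≤ D.card + 1 := card_insert_le _ _
    have h3 : (2:ℕ) ^ (insert v D).card ≤ 2 ^ (D.card + 1) :=
      Nat.pow_le_pow_right (by norm_num) h2
    have h4 : (2:ℕ) ^ (D.card + 1) < 2 ^ (D.card + 3) :=
      Nat.pow_lt_pow_right (by norm_num) (by omega)
    omega
  obtain ⟨e1, he1A, he1⟩ := h1
  obtain ⟨x, hxe1, hx⟩ := not_subset.mp he1
  have h2 : ∃ e2 ∈ A.erase e1, ¬ e2 ⊆ insert x (insert v D) := by
    by_contra hcon
    push_neg at hcon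
    have hle : (A.erase e1).card ≤ 2 ^ (insert x (insert v D)).card :=
      card_le_of_subset_powerset hcon
    have hc2 : (insert x (insert v D)).card ≤ D.card + 2 := by
      calc (insert x (insert v D)).card ≤ (insert v D).card + 1 := card_insert_le _ _
        _ ≤ D.card + 2 := by have := card_insert_le v D; omega
    have h3 : (2:ℕ) ^ (insert x (insert v D)).card ≤ 2 ^ (D.card + 2) :=
      Nat.pow_le_pow_right (by norm_num) hc2
    have h4 : (2:ℕ) ^ (D.card + 2) < 2 ^ (D.card + 3) :=
      Nat.pow_lt_pow_right (by norm_num) (by omega)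
    have h5 : (A.erase e1).card = A.card - 1 := card_erase_of_mem he1A
    omega
  obtain ⟨e2, he2A, he2⟩ := h2
  obtain ⟨z, hze2, hz⟩ := not_subset.mp he2
  have he1' : e1 ∈ H ∧ v ∈ e1 ∧ e1 ∉ U := by
    have := he1A
    rw [hA, mem_sdiff, mem_filter] at this
    tauto
  have he2' : e2 ∈ H ∧ v ∈ e2 ∧ e2 ∉ U := by
    have := mem_of_mem_erase he2A
    rw [hA, mem_sdiff, mem_filter] at this
    tauto
  simp only [mem_insert, not_or] at hx hz
  exact ⟨e1, he1'.1, e2, he2'.1, he1'.2.2, he2'.2.2, (ne_of_mem_erase he2A).symm,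
    he1'.2.1, he2'.2.1, x, hxe1, hx.2, hx.1, z, hze2, hz.2.2, hz.2.1, hz.1⟩

def emptyPairBlock (H : Finset (Finset V)) (D : Finset V) (U : Finset (Finset V)) :
    PairBlock H D U 0 where
  w := fun x => x.1.elim0
  E := fun i => i.elim0
  winj := fun a => a.1.elim0
  Einj := fun a => a.elim0
  mem := fun i => i.elim0
  EH := fun i => i.elim0
  EU := fun i => i.elim0
  wD := fun i => i.elim0

def emptyCherryBlock (H : Finset (Finset V)) (D : Finset V) (U : Finset (Finset V)) :
    CherryBlock H D U 0 where
  w := fun x => x.1.elim0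
  E := fun x => x.1.elim0
  winj := fun a => a.1.elim0
  Einj := fun a => a.1.elim0
  mem0 := fun j => j.elim0
  mem1 := fun j => j.elim0
  mem2 := fun j => j.elim0
  EH := fun jc => jc.1.elim0
  EU := fun jc => jc.1.elim0
  wD := fun j => j.elim0

/-- Phase P: extract `p` pair-gadgets from a scattered family `P` of edges with
pairwise disjoint low parts, each having at least 2 low vertices. -/
lemma pairPhase (H : Finset (Finset V)) (Sf : Finset V)
    (P : Finset (Finset V)) (hPH : P ⊆ H) (hP2 : ∀ e ∈ P, 2 ≤ (e \ Sf).card)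
    (hdisj : ∀ e ∈ P, ∀ f ∈ P, e ≠ f → Disjoint (e \ Sf) (f \ Sf)) :
    ∀ (p : ℕ) (D : Finset V) (U : Finset (Finset V)),
      (p = 0 ∨ D.card + U.card + 3 * p - 2 ≤ P.card) →
      ∃ B : PairBlock H D U p, (∀ i, B.E i ∈ P) ∧ (∀ i j, B.w (i, j) ∈ B.E i \ Sf) := by
  intro p
  induction p with
  | zero =>
    intro D U _
    exact ⟨emptyPairBlock H D U, fun i => i.elim0, fun i => i.elim0⟩
  | succ p ih =>
    intro D U hcard'
    have hcard : D.card + U.card + 3 * (p + 1) - 2 ≤ P.card :=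
      hcard'.resolve_left (Nat.succ_ne_zero p)
    classical
    -- find an unspoiled edge in P
    set bad := P.filter (fun e => e ∈ U ∨ ¬ Disjoint (e \ Sf) D) with hbad
    have hbadcard : bad.card ≤ U.card + D.card := by
      have hsplit : bad ⊆ (P.filter (fun e => e ∈ U)) ∪
          (P.filter (fun e => ¬ Disjoint (e \ Sf) D)) := by
        intro e he
        rw [hbad, mem_filter] at he
        rcases he.2 with h | h
        · exact mem_union_left _ (mem_filter.mpr ⟨he.1, h⟩)
        · exact mem_union_right _ (mem_filter.mpr ⟨he.1, h⟩)
      have h1 : (P.filter (fun e => e ∈ U)).card ≤ U.card :=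
        card_le_card_of_injOn id (fun e he => (mem_filter.mp he).2) (fun _ _ _ _ h => h)
      have h2 : (P.filter (fun e => ¬ Disjoint (e \ Sf) D)).card ≤ D.card := by
        have hsub : P.filter (fun e => ¬ Disjoint (e \ Sf) D) ⊆
            D.biUnion (fun d => P.filter (fun e => d ∈ e \ Sf)) := by
          intro e he
          rw [mem_filter] at he
          obtain ⟨d, hd1, hd2⟩ := Finset.not_disjoint_iff.mp he.2
          exact mem_biUnion.mpr ⟨d, hd2, mem_filter.mpr ⟨he.1, hd1⟩⟩
        have hone : ∀ d ∈ D, (P.filter (fun e => d ∈ e \ Sf)).card ≤ 1 := by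
          intro d _
          rw [Finset.card_le_one]
          intro e he f hf
          rw [mem_filter] at he hf
          by_contra hne
          exact (Finset.disjoint_left.mp (hdisj e he.1 f hf.1 hne) he.2) hf.2
        calc (P.filter (fun e => ¬ Disjoint (e \ Sf) D)).card
            ≤ (D.biUnion (fun d => P.filter (fun e => d ∈ e \ Sf))).card :=
              card_le_card hsub
          _ ≤ ∑ d ∈ D, (P.filter (fun e => d ∈ e \ Sf)).card := card_biUnion_le
          _ ≤ ∑ _d ∈ D, 1 := Finset.sum_le_sum hone
          _ = D.card := by simp
      calc bad.card ≤ _ := card_le_card hsplit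
        _ ≤ _ := card_union_le _ _
        _ ≤ U.card + D.card := by omega
    have hbex : ∃ e0, e0 ∈ P \ bad := by
      have : (P \ bad).card ≠ 0 := by
        have := card_le_card_sdiff_add_card (s := P) (t := bad)
        omega
      rcases (P \ bad).eq_empty_or_nonempty with h | h
      · rw [h] at this; simp at this
      · exact h
    obtain ⟨e0, he0⟩ := hbex
    rw [mem_sdiff] at he0
    obtain ⟨he0P, he0bad⟩ := he0
    rw [hbad, mem_filter, not_and_or, not_or] at he0bad
    have he0ok : e0 ∉ U ∧ Disjoint (e0 \ Sf) D := by
      rcases he0bad with h | h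
      · exact absurd he0P h
      · rw [not_not] at h; exact h
    -- pick two low vertices of e0
    obtain ⟨a0, ha0, b0, hb0, hab⟩ := Finset.one_lt_card.mp (lt_of_lt_of_le one_lt_two (hP2 e0 he0P))
    -- recurse
    obtain ⟨B, hBP, hBlow⟩ := ih (insert a0 (insert b0 D)) (insert e0 U) (by
      rcases Nat.eq_zero_or_pos p with rfl | hp
      · exact Or.inl rfl
      · right
        have h1 : (insert a0 (insert b0 D)).card ≤ D.card + 2 := by
          calc (insert a0 (insert b0 D)).card ≤ (insert b0 D).card + 1 := card_insert_le _ _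
            _ ≤ D.card + 2 := by have := card_insert_le b0 D; omega
        have h2 : (insert e0 U).card ≤ U.card + 1 := card_insert_le _ _
        omega)
    -- extend
    have ha0D : a0 ∉ D := fun h => (Finset.disjoint_left.mp he0ok.2 ha0) h
    have hb0D : b0 ∉ D := fun h => (Finset.disjoint_left.mp he0ok.2 hb0) h
    refine ⟨⟨fun x => if h : (x.1 : ℕ) < p then B.w (⟨x.1, h⟩, x.2)
        else (if x.2 = 0 then a0 else b0),
      fun i => if h : (i : ℕ) < p then B.E ⟨i, h⟩ else e0, ?_, ?_, ?_, ?_, ?_, ?_⟩, ?_, ?_⟩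
    · -- winj
      rintro ⟨i, j⟩ ⟨i', j'⟩ h
      simp only at h
      have hnew : ∀ jj : Fin 2, (if jj = 0 then a0 else b0) ∈ insert a0 (insert b0 D) := by
        intro jj
        split_ifs
        · exact mem_insert_self _ _
        · exact mem_insert_of_mem (mem_insert_self _ _)
      by_cases h1 : (i : ℕ) < p <;> by_cases h2 : (i' : ℕ) < p
      · rw [dif_pos h1, dif_pos h2] at h
        have := B.winj h
        simp only [Prod.ext_iff, Fin.ext_iff] at this ⊢
        exact this
      · rw [dif_pos h1, dif_neg h2] at h
        exfalso
        have hm := hnew j'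
        rw [← h] at hm
        exact B.wD _ _ hm
      · rw [dif_neg h1, dif_pos h2] at h
        exfalso
        have hm := hnew j
        rw [h] at hm
        exact B.wD _ _ hm
      · have hii : (i : ℕ) = (i' : ℕ) := by
          have hi : (i : ℕ) < p + 1 := i.isLt
          have hi' : (i' : ℕ) < p + 1 := i'.isLt
          omega
        rw [dif_neg h1, dif_neg h2] at h
        have h01 : ∀ c : Fin 2, c ≠ 0 → c = 1 := by decide
        have hjj : j = j' := by
          by_cases hj : j = 0 <;> by_cases hj' : j' = 0
          · rw [hj, hj']
          · rw [if_pos hj, if_neg hj'] at h; exact absurd h hab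
          · rw [if_neg hj, if_pos hj'] at h; exact absurd h.symm hab
          · rw [h01 j hj, h01 j' hj']
        exact Prod.ext (Fin.ext hii) hjj
    · -- Einj
      intro i i' h
      simp only at h
      split_ifs at h with h1 h2 h2
      · have := B.Einj h
        simp only [Fin.ext_iff] at this ⊢
        exact this
      · exfalso
        have hc : B.E ⟨i, h1⟩ ∈ insert e0 U := by rw [h]; exact mem_insert_self _ _
        exact B.EU _ hc
      · exfalso
        have hc : B.E ⟨i', h2⟩ ∈ insert e0 U := by rw [← h]; exact mem_insert_self _ _
        exact B.EU _ hc
      · have hi : (i : ℕ) < p + 1 := i.isLt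
        have hi' : (i' : ℕ) < p + 1 := i'.isLt
        exact Fin.ext (by omega)
    · -- mem
      intro i j
      simp only
      split_ifs with h1 h2
      · exact B.mem _ _
      · exact (mem_sdiff.mp ha0).1
      · exact (mem_sdiff.mp hb0).1
    · -- EH
      intro i
      split_ifs with h1
      · exact B.EH _
      · exact hPH he0P
    · -- EU
      intro i
      split_ifs with h1
      · exact fun hc => B.EU _ (mem_insert_of_mem hc)
      · exact he0ok.1
    · -- wD
      intro i j
      simp only
      split_ifs with h1 h2
      · exact fun hc => B.wD _ _ (mem_insert_of_mem (mem_insert_of_mem hc))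
      · exact ha0D
      · exact hb0D
    · -- E i ∈ P
      intro i
      simp only
      split_ifs with h1
      · exact hBP _
      · exact he0P
    · -- w ∈ E \ Sf
      intro i j
      simp only
      split_ifs with h1 h2
      · exact hBlow _ _
      · exact ha0
      · exact hb0

/-- Phase S (pairs): `p` pair-gadgets hosted at distinct high-degree centers from
`avail`, with all designated vertices avoiding `D ∪ protect`. -/
lemma sPhasePairs (H : Finset (Finset V)) (Sf : Finset V) (dth : ℕ)
    (hSdeg : ∀ v ∈ Sf, dth ≤ degH H v) :
    ∀ (p : ℕ) (avail protect D : Finset V) (U : Finset (Finset V)),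
      avail ⊆ Sf → p ≤ avail.card → (∀ v ∈ avail, v ∉ D) →
      (∀ v ∈ avail, v ∉ protect) →
      2 ^ (D.card + avail.card + protect.card + 2 * p + 3) + (U.card + p) + 2 ≤ dth →
      ∃ B : PairBlock H D U p, ∀ i j, B.w (i, j) ∉ protect := by
  intro p
  induction p with
  | zero =>
    intro avail protect D U _ _ _ _ _
    exact ⟨emptyPairBlock H D U, fun i => i.elim0⟩
  | succ p ih =>
    intro avail protect D U hsub hcardav hDav hprot hnum
    classical
    have hav : avail.Nonempty := card_pos.mp (by omega)
    obtain ⟨v, hv⟩ := hav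
    have hdeg : 2 ^ ((D ∪ protect ∪ avail.erase v).card + 3) + U.card + 2 ≤ degH H v := by
      have hc : (D ∪ protect ∪ avail.erase v).card ≤ D.card + protect.card + avail.card := by
        calc (D ∪ protect ∪ avail.erase v).card
            ≤ (D ∪ protect).card + (avail.erase v).card := card_union_le _ _
          _ ≤ D.card + protect.card + avail.card := by
              have h1 := card_union_le D protect
              have h2 : (avail.erase v).card ≤ avail.card := card_erase_le
              omega
      have hpow : (2:ℕ) ^ ((D ∪ protect ∪ avail.erase v).card + 3)
          ≤ 2 ^ (D.card + avail.card + protect.card + 2 * (p+1) + 3) :=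
        Nat.pow_le_pow_right (by norm_num) (by omega)
      have := hSdeg v (hsub hv)
      omega
    obtain ⟨e1, he1H, e2, he2H, he1U, he2U, he12, hve1, hve2, x, hxe1, hxD, hxv, z, hze2,
      hzD, hzv, hzx⟩ := host_cherry H v (D ∪ protect ∪ avail.erase v) U hdeg
    simp only [mem_union, not_or] at hxD
    obtain ⟨B, hBprot⟩ := ih (avail.erase v) protect (insert v (insert x D)) (insert e1 U)
      (fun w hw => hsub (mem_of_mem_erase hw))
      (by have := card_erase_of_mem hv; omega)
      (by
        intro w hw
        simp only [mem_insert, not_or]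
        refine ⟨ne_of_mem_erase hw, ?_, hDav w (mem_of_mem_erase hw)⟩
        intro hwx
        exact hxD.2 (hwx ▸ hw))
      (fun w hw => hprot w (mem_of_mem_erase hw))
      (by
        have hD2 : (insert v (insert x D)).card ≤ D.card + 2 := by
          calc (insert v (insert x D)).card ≤ (insert x D).card + 1 := card_insert_le _ _
            _ ≤ D.card + 2 := by have := card_insert_le x D; omega
        have hU1 : (insert e1 U).card ≤ U.card + 1 := card_insert_le _ _
        have he : (avail.erase v).card = avail.card - 1 := card_erase_of_mem hv
        have hpow : (2:ℕ) ^ ((insert v (insert x D)).card + (avail.erase v).card +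
            protect.card + 2 * p + 3)
            ≤ 2 ^ (D.card + avail.card + protect.card + 2 * (p+1) + 3) :=
          Nat.pow_le_pow_right (by norm_num) (by omega)
        omega)
    have hvD : v ∉ D := hDav v hv
    have hxD' : x ∉ D := hxD.1.1
    refine ⟨⟨fun y => if h : (y.1 : ℕ) < p then B.w (⟨y.1, h⟩, y.2)
        else (if y.2 = 0 then v else x),
      fun i => if h : (i : ℕ) < p then B.E ⟨i, h⟩ else e1, ?_, ?_, ?_, ?_, ?_, ?_⟩, ?_⟩
    · -- winj
      rintro ⟨i, j⟩ ⟨i', j'⟩ h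
      simp only at h
      have hnew : ∀ jj : Fin 2, (if jj = 0 then v else x) ∈ insert v (insert x D) := by
        intro jj
        split_ifs
        · exact mem_insert_self _ _
        · exact mem_insert_of_mem (mem_insert_self _ _)
      by_cases h1 : (i : ℕ) < p <;> by_cases h2 : (i' : ℕ) < p
      · rw [dif_pos h1, dif_pos h2] at h
        have := B.winj h
        simp only [Prod.ext_iff, Fin.ext_iff] at this ⊢
        exact this
      · rw [dif_pos h1, dif_neg h2] at h
        exfalso
        have hm := hnew j'
        rw [← h] at hm
        exact B.wD _ _ hm
      · rw [dif_neg h1, dif_pos h2] at h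
        exfalso
        have hm := hnew j
        rw [h] at hm
        exact B.wD _ _ hm
      · have hii : (i : ℕ) = (i' : ℕ) := by
          have hi : (i : ℕ) < p + 1 := i.isLt
          have hi' : (i' : ℕ) < p + 1 := i'.isLt
          omega
        rw [dif_neg h1, dif_neg h2] at h
        have h01 : ∀ c : Fin 2, c ≠ 0 → c = 1 := by decide
        have hjj : j = j' := by
          by_cases hj : j = 0 <;> by_cases hj' : j' = 0
          · rw [hj, hj']
          · rw [if_pos hj, if_neg hj'] at h; exact absurd h.symm hxv
          · rw [if_neg hj, if_pos hj'] at h; exact absurd h hxv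
          · rw [h01 j hj, h01 j' hj']
        exact Prod.ext (Fin.ext hii) hjj
    · -- Einj
      intro i i' h
      simp only at h
      split_ifs at h with h1 h2 h2
      · have := B.Einj h
        simp only [Fin.ext_iff] at this ⊢
        exact this
      · exfalso
        have hc : B.E ⟨i, h1⟩ ∈ insert e1 U := by rw [h]; exact mem_insert_self _ _
        exact B.EU _ hc
      · exfalso
        have hc : B.E ⟨i', h2⟩ ∈ insert e1 U := by rw [← h]; exact mem_insert_self _ _
        exact B.EU _ hc
      · have hi : (i : ℕ) < p + 1 := i.isLt
        have hi' : (i' : ℕ) < p + 1 := i'.isLt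
        exact Fin.ext (by omega)
    · -- mem
      intro i j
      simp only
      split_ifs with h1 h2
      · exact B.mem _ _
      · exact hve1
      · exact hxe1
    · -- EH
      intro i
      split_ifs with h1
      · exact B.EH _
      · exact he1H
    · -- EU
      intro i
      split_ifs with h1
      · exact fun hc => B.EU _ (mem_insert_of_mem hc)
      · exact he1U
    · -- wD
      intro i j
      simp only
      split_ifs with h1 h2
      · exact fun hc => B.wD _ _ (mem_insert_of_mem (mem_insert_of_mem hc))
      · exact hvD
      · exact hxD'
    · -- protect
      intro i j
      simp only
      split_ifs with h1 h2
      · exact hBprot _ _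
      · exact hprot v hv
      · exact hxD.1.2

/-- Phase S (cherries): `q` cherry-gadgets hosted at distinct high-degree centers. -/
lemma sPhaseCherries (H : Finset (Finset V)) (Sf : Finset V) (dth : ℕ)
    (hSdeg : ∀ v ∈ Sf, dth ≤ degH H v) :
    ∀ (q : ℕ) (avail protect D : Finset V) (U : Finset (Finset V)),
      avail ⊆ Sf → q ≤ avail.card → (∀ v ∈ avail, v ∉ D) →
      2 ^ (D.card + avail.card + protect.card + 3 * q + 3) + (U.card + 2 * q) + 2 ≤ dth →
      ∃ _B : CherryBlock H D U q, True := by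
  intro q
  induction q with
  | zero =>
    intro avail protect D U _ _ _ _
    exact ⟨emptyCherryBlock H D U, trivial⟩
  | succ q ih =>
    intro avail protect D U hsub hcardav hDav hnum
    classical
    have hav : avail.Nonempty := card_pos.mp (by omega)
    obtain ⟨v, hv⟩ := hav
    have hdeg : 2 ^ ((D ∪ protect ∪ avail.erase v).card + 3) + U.card + 2 ≤ degH H v := by
      have hc : (D ∪ protect ∪ avail.erase v).card ≤ D.card + protect.card + avail.card := by
        calc (D ∪ protect ∪ avail.erase v).card
            ≤ (D ∪ protect).card + (avail.erase v).card := card_union_le _ _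
          _ ≤ D.card + protect.card + avail.card := by
              have h1 := card_union_le D protect
              have h2 : (avail.erase v).card ≤ avail.card := card_erase_le
              omega
      have hpow : (2:ℕ) ^ ((D ∪ protect ∪ avail.erase v).card + 3)
          ≤ 2 ^ (D.card + avail.card + protect.card + 3 * (q+1) + 3) :=
        Nat.pow_le_pow_right (by norm_num) (by omega)
      have := hSdeg v (hsub hv)
      omega
    obtain ⟨e1, he1H, e2, he2H, he1U, he2U, he12, hve1, hve2, x, hxe1, hxD, hxv, z, hze2,
      hzD, hzv, hzx⟩ := host_cherry H v (D ∪ protect ∪ avail.erase v) U hdeg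
    simp only [mem_union, not_or] at hxD hzD
    obtain ⟨B, -⟩ := ih (avail.erase v) protect (insert v (insert x (insert z D)))
      (insert e1 (insert e2 U))
      (fun w hw => hsub (mem_of_mem_erase hw))
      (by have := card_erase_of_mem hv; omega)
      (by
        intro w hw
        simp only [mem_insert, not_or]
        refine ⟨ne_of_mem_erase hw, ?_, ?_, hDav w (mem_of_mem_erase hw)⟩
        · intro hwx; exact hxD.2 (hwx ▸ hw)
        · intro hwz; exact hzD.2 (hwz ▸ hw))
      (by
        have hD3 : (insert v (insert x (insert z D))).card ≤ D.card + 3 := by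
          have g1 := card_insert_le z D
          have g2 := card_insert_le x (insert z D)
          have g3 := card_insert_le v (insert x (insert z D))
          omega
        have hU2 : (insert e1 (insert e2 U)).card ≤ U.card + 2 := by
          have g1 := card_insert_le e2 U
          have g2 := card_insert_le e1 (insert e2 U)
          omega
        have he : (avail.erase v).card = avail.card - 1 := card_erase_of_mem hv
        have hpow : (2:ℕ) ^ ((insert v (insert x (insert z D))).card + (avail.erase v).card +
            protect.card + 3 * q + 3)
            ≤ 2 ^ (D.card + avail.card + protect.card + 3 * (q+1) + 3) :=
          Nat.pow_le_pow_right (by norm_num) (by omega)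
        omega)
    have hvD : v ∉ D := hDav v hv
    have hxD' : x ∉ D := hxD.1.1
    have hzD' : z ∉ D := hzD.1.1
    refine ⟨⟨fun y => if h : (y.1 : ℕ) < q then B.w (⟨y.1, h⟩, y.2)
        else (if y.2 = 0 then v else if y.2 = 1 then x else z),
      fun y => if h : (y.1 : ℕ) < q then B.E (⟨y.1, h⟩, y.2)
        else (if y.2 = 0 then e1 else e2), ?_, ?_, ?_, ?_, ?_, ?_, ?_, ?_⟩, trivial⟩
    · -- winj
      rintro ⟨i, j⟩ ⟨i', j'⟩ h
      simp only at h
      have hnew : ∀ jj : Fin 3, (if jj = 0 then v else if jj = 1 then x else z)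
          ∈ insert v (insert x (insert z D)) := by
        intro jj
        split_ifs
        · exact mem_insert_self _ _
        · exact mem_insert_of_mem (mem_insert_self _ _)
        · exact mem_insert_of_mem (mem_insert_of_mem (mem_insert_self _ _))
      by_cases h1 : (i : ℕ) < q <;> by_cases h2 : (i' : ℕ) < q
      · rw [dif_pos h1, dif_pos h2] at h
        have := B.winj h
        simp only [Prod.ext_iff, Fin.ext_iff] at this ⊢
        exact this
      · rw [dif_pos h1, dif_neg h2] at h
        exfalso
        have hm := hnew j'
        rw [← h] at hm
        exact B.wD _ _ hm
      · rw [dif_neg h1, dif_pos h2] at h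
        exfalso
        have hm := hnew j
        rw [h] at hm
        exact B.wD _ _ hm
      · have hii : (i : ℕ) = (i' : ℕ) := by
          have hi : (i : ℕ) < q + 1 := i.isLt
          have hi' : (i' : ℕ) < q + 1 := i'.isLt
          omega
        rw [dif_neg h1, dif_neg h2] at h
        have h012 : ∀ c : Fin 3, c ≠ 0 → c ≠ 1 → c = 2 := by decide
        have hjj : j = j' := by
          by_cases hj0 : j = 0 <;> by_cases hj0' : j' = 0
          · rw [hj0, hj0']
          · rw [if_pos hj0, if_neg hj0'] at h
            split_ifs at h
            · exact absurd h.symm hxv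
            · exact absurd h.symm hzv
          · rw [if_neg hj0, if_pos hj0'] at h
            split_ifs at h
            · exact absurd h hxv
            · exact absurd h hzv
          · rw [if_neg hj0, if_neg hj0'] at h
            by_cases hj1 : j = 1 <;> by_cases hj1' : j' = 1
            · rw [hj1, hj1']
            · rw [if_pos hj1, if_neg hj1'] at h; exact absurd h.symm hzx
            · rw [if_neg hj1, if_pos hj1'] at h; exact absurd h hzx
            · rw [h012 j hj0 hj1, h012 j' hj0' hj1']
        exact Prod.ext (Fin.ext hii) hjj
    · -- Einj
      rintro ⟨i, j⟩ ⟨i', j'⟩ h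
      simp only at h
      have hnewE : ∀ jj : Fin 2, (if jj = 0 then e1 else e2) ∈ insert e1 (insert e2 U) := by
        intro jj
        split_ifs
        · exact mem_insert_self _ _
        · exact mem_insert_of_mem (mem_insert_self _ _)
      by_cases h1 : (i : ℕ) < q <;> by_cases h2 : (i' : ℕ) < q
      · rw [dif_pos h1, dif_pos h2] at h
        have := B.Einj h
        simp only [Prod.ext_iff, Fin.ext_iff] at this ⊢
        exact this
      · rw [dif_pos h1, dif_neg h2] at h
        exfalso
        have hm := hnewE j'
        rw [← h] at hm
        exact B.EU _ hm
      · rw [dif_neg h1, dif_pos h2] at h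
        exfalso
        have hm := hnewE j
        rw [h] at hm
        exact B.EU _ hm
      · have hii : (i : ℕ) = (i' : ℕ) := by
          have hi : (i : ℕ) < q + 1 := i.isLt
          have hi' : (i' : ℕ) < q + 1 := i'.isLt
          omega
        rw [dif_neg h1, dif_neg h2] at h
        have h01 : ∀ c : Fin 2, c ≠ 0 → c = 1 := by decide
        have hjj : j = j' := by
          by_cases hj : j = 0 <;> by_cases hj' : j' = 0
          · rw [hj, hj']
          · rw [if_pos hj, if_neg hj'] at h; exact absurd h he12
          · rw [if_neg hj, if_pos hj'] at h; exact absurd h.symm he12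
          · rw [h01 j hj, h01 j' hj']
        exact Prod.ext (Fin.ext hii) hjj
    · -- mem0
      intro j c
      simp only
      by_cases h1 : (j : ℕ) < q
      · simp only [dif_pos h1]; exact B.mem0 _ _
      · simp only [dif_neg h1]
        norm_num
        split_ifs
        · exact hve1
        · exact hve2
    · -- mem1
      intro j
      simp only
      by_cases h1 : (j : ℕ) < q
      · simp only [dif_pos h1]; exact B.mem1 _
      · simp only [dif_neg h1]
        norm_num
        exact hxe1
    · -- mem2
      intro j
      simp only
      by_cases h1 : (j : ℕ) < q
      · simp only [dif_pos h1]; exact B.mem2 _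
      · simp only [dif_neg h1]
        norm_num
        exact hze2
    · -- EH
      rintro ⟨i, j⟩
      simp only
      split_ifs with h1 h2
      · exact B.EH _
      · exact he1H
      · exact he2H
    · -- EU
      rintro ⟨i, j⟩
      simp only
      split_ifs with h1 h2
      · exact fun hc => B.EU _ (mem_insert_of_mem (mem_insert_of_mem hc))
      · exact he1U
      · exact he2U
    · -- wD
      intro i j
      simp only
      split_ifs with h1 h2 h3
      · exact fun hc => B.wD _ _ (mem_insert_of_mem (mem_insert_of_mem (mem_insert_of_mem hc)))
      · exact hvD
      · exact hxD'
      · exact hzD'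

/-- Phase X: `q` cherry-gadgets centered at vertices of `X`, each of which carries a
seed cherry with low leaves. Spoilage is controlled by low degrees. -/
lemma xPhase (H : Finset (Finset V)) (Sf : Finset V) (r d0 : ℕ)
    (huni : ∀ e ∈ H, e.card ≤ r)
    (hlow : ∀ v, v ∉ Sf → degH H v ≤ d0)
    (X : Finset V)
    (hX : ∀ v ∈ X, v ∉ Sf ∧ ∃ e, e ∈ H ∧ ∃ f, f ∈ H ∧ e ≠ f ∧ v ∈ e ∧ v ∈ f ∧
      ∃ x, x ∈ e \ Sf ∧ x ≠ v ∧ ∃ z, z ∈ f \ Sf ∧ z ≠ v ∧ z ≠ x) :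
    ∀ (q : ℕ) (D : Finset V) (U : Finset (Finset V)),
      (∀ d ∈ D, d ∉ Sf) → U ⊆ H →
      (q = 0 ∨ q * (3 * (d0 * r + 1) + 2 * r) + (D.card * (d0 * r + 1) + U.card * r)
        ≤ X.card) →
      ∃ B : CherryBlock H D U q, ∀ j c, B.w (j, c) ∉ Sf := by
  intro q
  induction q with
  | zero =>
    intro D U _ _ _
    exact ⟨emptyCherryBlock H D U, fun j => j.elim0⟩
  | succ q ih =>
    intro D U hDSf hUH hnum'
    have hnum : (q + 1) * (3 * (d0 * r + 1) + 2 * r)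
        + (D.card * (d0 * r + 1) + U.card * r) ≤ X.card :=
      hnum'.resolve_left (Nat.succ_ne_zero q)
    classical
    set spoil : Finset V := D ∪ U.biUnion id ∪
      (H.filter (fun e => ¬ Disjoint e D)).biUnion id with hspoil
    have hspoilcard : spoil.card ≤ D.card * (d0 * r + 1) + U.card * r := by
      have h1 : (U.biUnion id).card ≤ U.card * r := by
        calc (U.biUnion id).card ≤ ∑ e ∈ U, (id e).card := card_biUnion_le
          _ ≤ ∑ _e ∈ U, r := Finset.sum_le_sum (fun e he => huni e (hUH he))
          _ = U.card * r := by rw [Finset.sum_const, smul_eq_mul]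
      have h2 : (H.filter (fun e => ¬ Disjoint e D)).card ≤ D.card * d0 := by
        have hsub : H.filter (fun e => ¬ Disjoint e D) ⊆
            D.biUnion (fun d => H.filter (fun e => d ∈ e)) := by
          intro e he
          rw [mem_filter] at he
          obtain ⟨d, hd1, hd2⟩ := Finset.not_disjoint_iff.mp he.2
          exact mem_biUnion.mpr ⟨d, hd2, mem_filter.mpr ⟨he.1, hd1⟩⟩
        calc (H.filter (fun e => ¬ Disjoint e D)).card
            ≤ (D.biUnion (fun d => H.filter (fun e => d ∈ e))).card := card_le_card hsub
          _ ≤ ∑ d ∈ D, (H.filter (fun e => d ∈ e)).card := card_biUnion_le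
          _ ≤ ∑ d ∈ D, d0 := Finset.sum_le_sum (fun d hd => hlow d (hDSf d hd))
          _ = D.card * d0 := by rw [Finset.sum_const, smul_eq_mul]
      have h3 : ((H.filter (fun e => ¬ Disjoint e D)).biUnion id).card ≤ D.card * d0 * r := by
        calc ((H.filter (fun e => ¬ Disjoint e D)).biUnion id).card
            ≤ ∑ e ∈ H.filter (fun e => ¬ Disjoint e D), (id e).card := card_biUnion_le
          _ ≤ ∑ _e ∈ H.filter (fun e => ¬ Disjoint e D), r :=
              Finset.sum_le_sum (fun e he => huni e (mem_of_mem_filter e he))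
          _ = (H.filter (fun e => ¬ Disjoint e D)).card * r := by
              rw [Finset.sum_const, smul_eq_mul]
          _ ≤ D.card * d0 * r := Nat.mul_le_mul_right r h2
      calc spoil.card ≤ (D ∪ U.biUnion id).card +
            ((H.filter (fun e => ¬ Disjoint e D)).biUnion id).card := card_union_le _ _
        _ ≤ D.card + (U.biUnion id).card +
            ((H.filter (fun e => ¬ Disjoint e D)).biUnion id).card := by
            have := card_union_le D (U.biUnion id); omega
        _ ≤ D.card + U.card * r + D.card * d0 * r := by omega
        _ ≤ D.card * (d0 * r + 1) + U.card * r := by ring_nf; nlinarith [Nat.zero_le (D.card * (d0 * r))]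
    have hvex : ∃ v, v ∈ X \ spoil := by
      have hlt : spoil.card < X.card := by
        have hge : 1 ≤ 3 * (d0 * r + 1) + 2 * r := by omega
        have hq1 : 3 * (d0 * r + 1) + 2 * r ≤ (q + 1) * (3 * (d0 * r + 1) + 2 * r) :=
          Nat.le_mul_of_pos_left _ (by omega)
        omega
      have : (X \ spoil).card ≠ 0 := by
        have := card_le_card_sdiff_add_card (s := X) (t := spoil)
        omega
      rcases (X \ spoil).eq_empty_or_nonempty with h | h
      · rw [h] at this; simp at this
      · exact h.exists_mem
    obtain ⟨v, hv⟩ := hvex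
    rw [mem_sdiff] at hv
    obtain ⟨hvX, hvsp⟩ := hv
    have hnospU : ∀ g, g ∈ U → v ∉ g := by
      intro g hg hvg
      exact hvsp (mem_union_left _ (mem_union_right _ (mem_biUnion.mpr ⟨g, hg, hvg⟩)))
    have hnospD : v ∉ D := fun h => hvsp (mem_union_left _ (mem_union_left _ h))
    have hnospF : ∀ g, g ∈ H → v ∈ g → Disjoint g D := by
      intro g hg hvg
      by_contra hc
      exact hvsp (mem_union_right _ (mem_biUnion.mpr ⟨g, mem_filter.mpr ⟨hg, hc⟩, hvg⟩))
    obtain ⟨hvSf, e1, he1H, e2, he2H, he12, hve1, hve2, x, hxe1', hxv, z, hze2', hzv, hzx⟩ :=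
      hX v hvX
    rw [mem_sdiff] at hxe1' hze2'
    obtain ⟨hxe1, hxSf⟩ := hxe1'
    obtain ⟨hze2, hzSf⟩ := hze2'
    have he1U : e1 ∉ U := fun h => hnospU e1 h hve1
    have he2U : e2 ∉ U := fun h => hnospU e2 h hve2
    have hxD' : x ∉ D := fun h => (Finset.disjoint_left.mp (hnospF e1 he1H hve1) hxe1) h
    have hzD' : z ∉ D := fun h => (Finset.disjoint_left.mp (hnospF e2 he2H hve2) hze2) h
    have hvD : v ∉ D := hnospD
    obtain ⟨B, hBSf⟩ := ih (insert v (insert x (insert z D))) (insert e1 (insert e2 U))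
      (by
        intro d hd
        simp only [mem_insert] at hd
        rcases hd with rfl | rfl | rfl | hd
        · exact hvSf
        · exact hxSf
        · exact hzSf
        · exact hDSf d hd)
      (by
        intro g hg
        simp only [mem_insert] at hg
        rcases hg with rfl | rfl | hg
        · exact he1H
        · exact he2H
        · exact hUH hg)
      (by
        right
        have hD3 : (insert v (insert x (insert z D))).card ≤ D.card + 3 := by
          have g1 := card_insert_le z D
          have g2 := card_insert_le x (insert z D)
          have g3 := card_insert_le v (insert x (insert z D))
          omega
        have hU2 : (insert e1 (insert e2 U)).card ≤ U.card + 2 := by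
          have g1 := card_insert_le e2 U
          have g2 := card_insert_le e1 (insert e2 U)
          omega
        have key : (insert v (insert x (insert z D))).card * (d0 * r + 1)
            + (insert e1 (insert e2 U)).card * r
            ≤ (D.card + 3) * (d0 * r + 1) + (U.card + 2) * r := by
          have := Nat.mul_le_mul_right (d0 * r + 1) hD3
          have := Nat.mul_le_mul_right r hU2
          omega
        have expand : (D.card + 3) * (d0 * r + 1) + (U.card + 2) * r
            = D.card * (d0 * r + 1) + U.card * r + (3 * (d0 * r + 1) + 2 * r) := by ring
        have hq : (q + 1) * (3 * (d0 * r + 1) + 2 * r)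
            = q * (3 * (d0 * r + 1) + 2 * r) + (3 * (d0 * r + 1) + 2 * r) := by ring
        omega)
    refine ⟨⟨fun y => if h : (y.1 : ℕ) < q then B.w (⟨y.1, h⟩, y.2)
        else (if y.2 = 0 then v else if y.2 = 1 then x else z),
      fun y => if h : (y.1 : ℕ) < q then B.E (⟨y.1, h⟩, y.2)
        else (if y.2 = 0 then e1 else e2), ?_, ?_, ?_, ?_, ?_, ?_, ?_, ?_⟩, ?_⟩
    · -- winj
      rintro ⟨i, j⟩ ⟨i', j'⟩ h
      simp only at h
      have hnew : ∀ jj : Fin 3, (if jj = 0 then v else if jj = 1 then x else z)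
          ∈ insert v (insert x (insert z D)) := by
        intro jj
        split_ifs
        · exact mem_insert_self _ _
        · exact mem_insert_of_mem (mem_insert_self _ _)
        · exact mem_insert_of_mem (mem_insert_of_mem (mem_insert_self _ _))
      by_cases h1 : (i : ℕ) < q <;> by_cases h2 : (i' : ℕ) < q
      · rw [dif_pos h1, dif_pos h2] at h
        have := B.winj h
        simp only [Prod.ext_iff, Fin.ext_iff] at this ⊢
        exact this
      · rw [dif_pos h1, dif_neg h2] at h
        exfalso
        have hm := hnew j'
        rw [← h] at hm
        exact B.wD _ _ hm
      · rw [dif_neg h1, dif_pos h2] at h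
        exfalso
        have hm := hnew j
        rw [h] at hm
        exact B.wD _ _ hm
      · have hii : (i : ℕ) = (i' : ℕ) := by
          have hi : (i : ℕ) < q + 1 := i.isLt
          have hi' : (i' : ℕ) < q + 1 := i'.isLt
          omega
        rw [dif_neg h1, dif_neg h2] at h
        have h012 : ∀ c : Fin 3, c ≠ 0 → c ≠ 1 → c = 2 := by decide
        have hjj : j = j' := by
          by_cases hj0 : j = 0 <;> by_cases hj0' : j' = 0
          · rw [hj0, hj0']
          · rw [if_pos hj0, if_neg hj0'] at h
            split_ifs at h
            · exact absurd h.symm hxv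
            · exact absurd h.symm hzv
          · rw [if_neg hj0, if_pos hj0'] at h
            split_ifs at h
            · exact absurd h hxv
            · exact absurd h hzv
          · rw [if_neg hj0, if_neg hj0'] at h
            by_cases hj1 : j = 1 <;> by_cases hj1' : j' = 1
            · rw [hj1, hj1']
            · rw [if_pos hj1, if_neg hj1'] at h; exact absurd h.symm hzx
            · rw [if_neg hj1, if_pos hj1'] at h; exact absurd h hzx
            · rw [h012 j hj0 hj1, h012 j' hj0' hj1']
        exact Prod.ext (Fin.ext hii) hjj
    · -- Einj
      rintro ⟨i, j⟩ ⟨i', j'⟩ h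
      simp only at h
      have hnewE : ∀ jj : Fin 2, (if jj = 0 then e1 else e2) ∈ insert e1 (insert e2 U) := by
        intro jj
        split_ifs
        · exact mem_insert_self _ _
        · exact mem_insert_of_mem (mem_insert_self _ _)
      by_cases h1 : (i : ℕ) < q <;> by_cases h2 : (i' : ℕ) < q
      · rw [dif_pos h1, dif_pos h2] at h
        have := B.Einj h
        simp only [Prod.ext_iff, Fin.ext_iff] at this ⊢
        exact this
      · rw [dif_pos h1, dif_neg h2] at h
        exfalso
        have hm := hnewE j'
        rw [← h] at hm
        exact B.EU _ hm
      · rw [dif_neg h1, dif_pos h2] at h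
        exfalso
        have hm := hnewE j
        rw [h] at hm
        exact B.EU _ hm
      · have hii : (i : ℕ) = (i' : ℕ) := by
          have hi : (i : ℕ) < q + 1 := i.isLt
          have hi' : (i' : ℕ) < q + 1 := i'.isLt
          omega
        rw [dif_neg h1, dif_neg h2] at h
        have h01 : ∀ c : Fin 2, c ≠ 0 → c = 1 := by decide
        have hjj : j = j' := by
          by_cases hj : j = 0 <;> by_cases hj' : j' = 0
          · rw [hj, hj']
          · rw [if_pos hj, if_neg hj'] at h; exact absurd h he12
          · rw [if_neg hj, if_pos hj'] at h; exact absurd h.symm he12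
          · rw [h01 j hj, h01 j' hj']
        exact Prod.ext (Fin.ext hii) hjj
    · -- mem0
      intro j c
      simp only
      by_cases h1 : (j : ℕ) < q
      · simp only [dif_pos h1]; exact B.mem0 _ _
      · simp only [dif_neg h1]
        norm_num
        split_ifs
        · exact hve1
        · exact hve2
    · -- mem1
      intro j
      simp only
      by_cases h1 : (j : ℕ) < q
      · simp only [dif_pos h1]; exact B.mem1 _
      · simp only [dif_neg h1]
        norm_num
        exact hxe1
    · -- mem2
      intro j
      simp only
      by_cases h1 : (j : ℕ) < q
      · simp only [dif_pos h1]; exact B.mem2 _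
      · simp only [dif_neg h1]
        norm_num
        exact hze2
    · -- EH
      rintro ⟨i, j⟩
      simp only
      split_ifs with h1 h2
      · exact B.EH _
      · exact he1H
      · exact he2H
    · -- EU
      rintro ⟨i, j⟩
      simp only
      split_ifs with h1 h2
      · exact fun hc => B.EU _ (mem_insert_of_mem (mem_insert_of_mem hc))
      · exact he1U
      · exact he2U
    · -- wD
      intro i j
      simp only
      split_ifs with h1 h2 h3
      · exact fun hc => B.wD _ _ (mem_insert_of_mem (mem_insert_of_mem (mem_insert_of_mem hc)))
      · exact hvD
      · exact hxD'
      · exact hzD'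
    · -- not in Sf
      intro j c
      simp only
      split_ifs with h1 h2 h3
      · exact hBSf _ _
      · exact hvSf
      · exact hxSf
      · exact hzSf

end Deg

section MGL
variable {V : Type*} [DecidableEq V]

/-- Master greedy lemma: `p1` pair gadgets from the scattered family `P`, `q1` cherry
gadgets centered in `X`, and the remaining gadgets hosted at the high-degree set `Sf`,
assemble into a Berge copy of `M_t ∪ u·S_2`. -/
theorem MGL (H : Finset (Finset V)) (t u r d0 : ℕ) (Sf : Finset V)
    (huni : ∀ e ∈ H, e.card ≤ r)
    (hlow : ∀ v, v ∉ Sf → degH H v ≤ d0)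
    (hSdeg : ∀ v ∈ Sf, 2 ^ (10 * (t + u) + 3) + 5 * (t + u) + 2 ≤ degH H v)
    (P : Finset (Finset V)) (hPH : P ⊆ H) (hP2 : ∀ e ∈ P, 2 ≤ (e \ Sf).card)
    (hdisj : ∀ e ∈ P, ∀ f ∈ P, e ≠ f → Disjoint (e \ Sf) (f \ Sf))
    (X : Finset V)
    (hX : ∀ v ∈ X, v ∉ Sf ∧ ∃ e, e ∈ H ∧ ∃ f, f ∈ H ∧ e ≠ f ∧ v ∈ e ∧ v ∈ f ∧
      ∃ x, x ∈ e \ Sf ∧ x ≠ v ∧ ∃ z, z ∈ f \ Sf ∧ z ≠ v ∧ z ≠ x)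
    (p1 q1 : ℕ) (hp1 : p1 ≤ t) (hq1 : q1 ≤ u)
    (hsavail : (t - p1) + (u - q1) ≤ Sf.card)
    (hPcard : p1 = 0 ∨ 3 * p1 - 2 ≤ P.card)
    (hXcard : q1 = 0 ∨
      q1 * (3 * (d0 * r + 1) + 2 * r) + (2 * p1 * (d0 * r + 1) + p1 * r) ≤ X.card) :
    IsBergeCopy (FG t u) H := by
  classical
  obtain ⟨P1, hP1P, hP1low⟩ := pairPhase H Sf P hPH hP2 hdisj p1 ∅ ∅ (by
    rcases hPcard with h | h
    · exact Or.inl h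
    · right; simpa using h)
  have hD1Sf : ∀ d ∈ P1.desig, d ∉ Sf := by
    intro d hd
    rw [PairBlock.desig, mem_image] at hd
    obtain ⟨⟨i, j⟩, -, rfl⟩ := hd
    exact (mem_sdiff.mp (hP1low i j)).2
  have hU1H : P1.eset ⊆ H := by
    intro g hg
    rw [PairBlock.eset, mem_image] at hg
    obtain ⟨i, -, rfl⟩ := hg
    exact P1.EH i
  have hD1c := P1.card_desig
  have hU1c := P1.card_eset
  obtain ⟨C1, hC1Sf⟩ := xPhase H Sf r d0 huni hlow X hX q1 P1.desig P1.eset hD1Sf hU1H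
    (by
      rcases hXcard with h | h
      · exact Or.inl h
      · right
        have m1 : P1.desig.card * (d0 * r + 1) ≤ 2 * p1 * (d0 * r + 1) :=
          Nat.mul_le_mul_right _ hD1c
        have m2 : P1.eset.card * r ≤ p1 * r := Nat.mul_le_mul_right _ hU1c
        omega)
  have hC1Sf' : ∀ d ∈ C1.desig, d ∉ Sf := by
    intro d hd
    rw [CherryBlock.desig, mem_image] at hd
    obtain ⟨⟨j, c⟩, -, rfl⟩ := hd
    exact hC1Sf j c
  have hC1dc := C1.card_desig
  have hC1ec := C1.card_eset
  -- choose S-phase centers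
  obtain ⟨A, hASf, hAcard⟩ := Finset.exists_subset_card_eq hsavail
  obtain ⟨Apair, hApA, hApcard⟩ := Finset.exists_subset_card_eq
    (show t - p1 ≤ A.card by omega)
  set Acherry := A \ Apair with hAch
  have hAchcard : Acherry.card = u - q1 := by
    rw [hAch, card_sdiff_of_subset hApA]
    omega
  have hApSf : Apair ⊆ Sf := hApA.trans hASf
  have hAchSf : Acherry ⊆ Sf := (sdiff_subset).trans hASf
  have hdisjAA : ∀ v ∈ Apair, v ∉ Acherry := by
    intro v hv hc
    rw [hAch, mem_sdiff] at hc
    exact hc.2 hv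
  have hP2dc := P1.card_desig
  -- S-phase pairs
  obtain ⟨P2, hP2prot⟩ := sPhasePairs H Sf (2 ^ (10 * (t + u) + 3) + 5 * (t + u) + 2) hSdeg
    (t - p1) Apair Acherry (P1.desig ∪ C1.desig) (P1.eset ∪ C1.eset)
    hApSf (le_of_eq hApcard.symm)
    (by
      intro v hv
      rw [mem_union]
      push_neg
      exact ⟨fun hc => hD1Sf v hc (hApSf hv), fun hc => hC1Sf' v hc (hApSf hv)⟩)
    (fun v hv => hdisjAA v hv)
    (by
      have hDc : (P1.desig ∪ C1.desig).card ≤ 2 * p1 + 3 * q1 := by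
        have := card_union_le P1.desig C1.desig
        omega
      have hUc : (P1.eset ∪ C1.eset).card ≤ p1 + 2 * q1 := by
        have := card_union_le P1.eset C1.eset
        omega
      have hexp : (P1.desig ∪ C1.desig).card + Apair.card + Acherry.card
          + 2 * (t - p1) + 3 ≤ 10 * (t + u) + 3 := by
        have h1 : Apair.card = t - p1 := hApcard
        have h2 : Acherry.card = u - q1 := hAchcard
        omega
      have hpow : (2:ℕ) ^ ((P1.desig ∪ C1.desig).card + Apair.card + Acherry.card
          + 2 * (t - p1) + 3) ≤ 2 ^ (10 * (t + u) + 3) :=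
        Nat.pow_le_pow_right (by norm_num) hexp
      omega)
  have hP2desigAch : ∀ d ∈ P2.desig, d ∉ Acherry := by
    intro d hd
    rw [PairBlock.desig, mem_image] at hd
    obtain ⟨⟨i, j⟩, -, rfl⟩ := hd
    exact hP2prot i j
  -- S-phase cherries
  obtain ⟨C2, -⟩ := sPhaseCherries H Sf (2 ^ (10 * (t + u) + 3) + 5 * (t + u) + 2) hSdeg
    (u - q1) Acherry ∅ (P1.desig ∪ C1.desig ∪ P2.desig) (P1.eset ∪ C1.eset ∪ P2.eset)
    hAchSf (le_of_eq hAchcard.symm)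
    (by
      intro v hv
      rw [mem_union, mem_union]
      push_neg
      refine ⟨⟨fun hc => hD1Sf v hc (hAchSf hv), fun hc => hC1Sf' v hc (hAchSf hv)⟩, ?_⟩
      exact fun hc => hP2desigAch v hc hv)
    (by
      have hDc : (P1.desig ∪ C1.desig ∪ P2.desig).card
          ≤ 2 * p1 + 3 * q1 + 2 * (t - p1) := by
        have h1 := card_union_le (P1.desig ∪ C1.desig) P2.desig
        have h2 := card_union_le P1.desig C1.desig
        have h3 := P2.card_desig
        omega
      have hUc : (P1.eset ∪ C1.eset ∪ P2.eset).card ≤ p1 + 2 * q1 + (t - p1) := by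
        have h1 := card_union_le (P1.eset ∪ C1.eset) P2.eset
        have h2 := card_union_le P1.eset C1.eset
        have h3 := P2.card_eset
        omega
      have hexp : (P1.desig ∪ C1.desig ∪ P2.desig).card + Acherry.card + (∅ : Finset V).card
          + 3 * (u - q1) + 3 ≤ 10 * (t + u) + 3 := by
        have h2 : Acherry.card = u - q1 := hAchcard
        simp only [card_empty]
        omega
      have hpow : (2:ℕ) ^ ((P1.desig ∪ C1.desig ∪ P2.desig).card + Acherry.card
          + (∅ : Finset V).card + 3 * (u - q1) + 3) ≤ 2 ^ (10 * (t + u) + 3) :=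
        Nat.pow_le_pow_right (by norm_num) hexp
      omega)
  exact berge_of_blocks hp1 hq1 P1 C1 P2 C2

end MGL

section Counting
variable {V : Type*} [Fintype V] [DecidableEq V]

/-- Partition count: the edges with at most one low vertex. -/
lemma partition_count (H : Finset (Finset V)) (Sf : Finset V) (r : ℕ) (hr : 1 ≤ r)
    (huni : ∀ e ∈ H, e.card = r) :
    H.card ≤ Sf.card.choose r + Sf.card.choose (r-1) * (Fintype.card V - Sf.card)
      + (H.filter (fun e => 2 ≤ (e \ Sf).card)).card := by
  classical
  have hsplit0 := card_filter_add_card_filter_not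
    (s := H) (p := fun e => (e \ Sf).card = 0)
  have hsplit1 := card_filter_add_card_filter_not
    (s := H.filter (fun e => ¬ (e \ Sf).card = 0)) (p := fun e => (e \ Sf).card = 1)
  -- edges inside Sf
  have h0 : (H.filter (fun e => (e \ Sf).card = 0)).card ≤ Sf.card.choose r := by
    have hsub : H.filter (fun e => (e \ Sf).card = 0) ⊆ Sf.powersetCard r := by
      intro e he
      rw [mem_filter] at he
      rw [mem_powersetCard]
      have hsub : e ⊆ Sf := by
        intro x hx
        by_contra hc
        have : x ∈ e \ Sf := mem_sdiff.mpr ⟨hx, hc⟩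
        have := card_pos.mpr ⟨x, this⟩
        omega
      exact ⟨hsub, huni e he.1⟩
    calc _ ≤ (Sf.powersetCard r).card := card_le_card hsub
      _ = _ := by rw [card_powersetCard]
  -- edges with exactly one low vertex
  have h1 : ((H.filter (fun e => ¬ (e \ Sf).card = 0)).filter
      (fun e => (e \ Sf).card = 1)).card
      ≤ Sf.card.choose (r-1) * (Fintype.card V - Sf.card) := by
    set H1 := (H.filter (fun e => ¬ (e \ Sf).card = 0)).filter (fun e => (e \ Sf).card = 1)
      with hH1
    have hinj : ∀ e ∈ H1, ∀ f ∈ H1,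
        (e \ Sf, e ∩ Sf) = (f \ Sf, f ∩ Sf) → e = f := by
      intro e _ f _ hef
      simp only [Prod.mk.injEq] at hef
      have he' : e = (e \ Sf) ∪ (e ∩ Sf) := (sdiff_union_inter e Sf).symm
      have hf' : f = (f \ Sf) ∪ (f ∩ Sf) := (sdiff_union_inter f Sf).symm
      rw [he', hf', hef.1, hef.2]
    have hmap : ∀ e ∈ H1, (e \ Sf, e ∩ Sf) ∈
        ((univ \ Sf).powersetCard 1) ×ˢ (Sf.powersetCard (r-1)) := by
      intro e he
      rw [hH1, mem_filter, mem_filter] at he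
      obtain ⟨⟨heH, -⟩, hc1⟩ := he
      rw [mem_product, mem_powersetCard, mem_powersetCard]
      refine ⟨⟨?_, hc1⟩, inter_subset_right, ?_⟩
      · intro x hx
        rw [mem_sdiff] at hx ⊢
        exact ⟨mem_univ _, hx.2⟩
      · show (e ∩ Sf).card = r - 1
        have hcc : (e \ Sf).card + (e ∩ Sf).card = e.card := card_sdiff_add_card_inter e Sf
        have := huni e heH
        omega
    calc H1.card ≤ (((univ \ Sf).powersetCard 1) ×ˢ (Sf.powersetCard (r-1))).card :=
          card_le_card_of_injOn _ hmap (fun e he f hf h => hinj e he f hf h)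
      _ = (univ \ Sf).card.choose 1 * Sf.card.choose (r-1) := by
          rw [card_product, card_powersetCard, card_powersetCard]
      _ = Sf.card.choose (r-1) * (Fintype.card V - Sf.card) := by
          rw [Nat.choose_one_right, card_sdiff_of_subset (subset_univ Sf), card_univ, Nat.mul_comm]
  -- edges with at least two low vertices
  have h2 : ((H.filter (fun e => ¬ (e \ Sf).card = 0)).filter
      (fun e => ¬ (e \ Sf).card = 1)).card ≤ (H.filter (fun e => 2 ≤ (e \ Sf).card)).card := by
    apply card_le_card
    intro e he
    rw [mem_filter, mem_filter] at he
    rw [mem_filter]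
    refine ⟨he.1.1, ?_⟩
    have h1 := he.1.2
    have h2 := he.2
    omega
  omega

/-- Scattered family extraction: a maximal subfamily of `B` with pairwise disjoint low
parts controls the size of `B`. -/
lemma scattered_family (H B : Finset (Finset V)) (Sf : Finset V) (r d0 : ℕ)
    (hBH : B ⊆ H)
    (hB2 : ∀ e ∈ B, 1 ≤ (e \ Sf).card)
    (huni : ∀ e ∈ H, e.card ≤ r)
    (hlow : ∀ v, v ∉ Sf → degH H v ≤ d0) :
    ∃ P : Finset (Finset V), P ⊆ B ∧
      (∀ e ∈ P, ∀ f ∈ P, e ≠ f → Disjoint (e \ Sf) (f \ Sf)) ∧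
      B.card ≤ P.card * r * d0 := by
  classical
  set Fam := B.powerset.filter
    (fun Q => ∀ e ∈ Q, ∀ f ∈ Q, e ≠ f → Disjoint (e \ Sf) (f \ Sf)) with hFam
  have hne : (∅ : Finset (Finset V)) ∈ Fam := by
    rw [hFam, mem_filter]
    exact ⟨empty_mem_powerset B, fun e he => absurd he (notMem_empty e)⟩
  obtain ⟨P, hPFam, hPmax⟩ := Fam.exists_max_image (fun Q => Q.card) ⟨∅, hne⟩
  rw [hFam, mem_filter, mem_powerset] at hPFam
  obtain ⟨hPB, hPdisj⟩ := hPFam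
  refine ⟨P, hPB, hPdisj, ?_⟩
  -- maximality: every edge of B meets the low part of some member of P
  have hcover : ∀ e ∈ B, ∃ f ∈ P, ¬ Disjoint (e \ Sf) (f \ Sf) := by
    intro e heB
    by_cases heP : e ∈ P
    · refine ⟨e, heP, ?_⟩
      rw [Finset.not_disjoint_iff]
      obtain ⟨x, hx⟩ := card_pos.mp (hB2 e heB)
      exact ⟨x, hx, hx⟩
    · by_contra hcon
      push_neg at hcon
      have hins : insert e P ∈ Fam := by
        rw [hFam, mem_filter, mem_powerset]
        refine ⟨insert_subset heB hPB, ?_⟩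
        intro a ha b hb hab
        rw [mem_insert] at ha hb
        rcases ha with rfl | ha <;> rcases hb with rfl | hb
        · exact absurd rfl hab
        · exact hcon b hb
        · exact (hcon a ha).symm
        · exact hPdisj a ha b hb hab
      have := hPmax (insert e P) hins
      rw [card_insert_of_notMem heP] at this
      omega
  -- count
  set L := P.biUnion (fun f => f \ Sf) with hL
  have hLcard : L.card ≤ P.card * r := by
    calc L.card ≤ ∑ f ∈ P, (f \ Sf).card := card_biUnion_le
      _ ≤ ∑ _f ∈ P, r := Finset.sum_le_sum (fun f hf => by
          calc (f \ Sf).card ≤ f.card := card_le_card sdiff_subset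
            _ ≤ r := huni f (hBH (hPB hf)))
      _ = P.card * r := by rw [Finset.sum_const, smul_eq_mul]
  have hBsub : B ⊆ L.biUnion (fun v => H.filter (fun e => v ∈ e)) := by
    intro e heB
    obtain ⟨f, hfP, hndis⟩ := hcover e heB
    obtain ⟨v, hv1, hv2⟩ := Finset.not_disjoint_iff.mp hndis
    refine mem_biUnion.mpr ⟨v, ?_, mem_filter.mpr ⟨hBH heB, (mem_sdiff.mp hv1).1⟩⟩
    rw [hL]
    exact mem_biUnion.mpr ⟨f, hfP, hv2⟩
  calc B.card ≤ (L.biUnion (fun v => H.filter (fun e => v ∈ e))).card := card_le_card hBsub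
    _ ≤ ∑ v ∈ L, (H.filter (fun e => v ∈ e)).card := card_biUnion_le
    _ ≤ ∑ v ∈ L, d0 := Finset.sum_le_sum (fun v hv => by
        rw [hL, mem_biUnion] at hv
        obtain ⟨f, hfP, hvf⟩ := hv
        exact hlow v (mem_sdiff.mp hvf).2)
    _ = L.card * d0 := by rw [Finset.sum_const, smul_eq_mul]
    _ ≤ P.card * r * d0 := Nat.mul_le_mul_right _ hLcard

end Counting

section Structure
variable {V : Type*} [Fintype V] [DecidableEq V]

/-- Structure of the bad edges when the cherry-center set `X` is exhausted:
pair-clusters and private edges. -/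
lemma B_structure (H : Finset (Finset V)) (Sf X : Finset V) (r d0 : ℕ)
    (huni : ∀ e ∈ H, e.card = r)
    (hlow : ∀ v, v ∉ Sf → degH H v ≤ d0)
    (hXSf : ∀ v ∈ X, v ∉ Sf)
    (hX : ∀ v, v ∉ Sf → v ∉ X →
      ¬ (∃ e, e ∈ H ∧ ∃ f, f ∈ H ∧ e ≠ f ∧ v ∈ e ∧ v ∈ f ∧
        ∃ x, x ∈ e \ Sf ∧ x ≠ v ∧ ∃ z, z ∈ f \ Sf ∧ z ≠ v ∧ z ≠ x)) :
    2 * (H.filter (fun e => 2 ≤ (e \ Sf).card)).card ≤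
      2 * (X.card * d0) +
      (if Sf.card.choose (r-2) ≤ 1 then 0 else Sf.card.choose (r-2)) * Fintype.card V
      + Fintype.card V := by
  classical
  set B := H.filter (fun e => 2 ≤ (e \ Sf).card) with hB
  have hBH : B ⊆ H := filter_subset _ _
  have hB2 : ∀ e ∈ B, 2 ≤ (e \ Sf).card := fun e he => (mem_filter.mp he).2
  -- the key classification
  have hK : ∀ e ∈ B, ∀ f ∈ B, e ≠ f → ∀ v, v ∈ e \ Sf → v ∉ X → v ∈ f →
      (e \ Sf).card = 2 ∧ e \ Sf = f \ Sf := by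
    intro e heB f hfB hef v hvlow hvX hvf
    have hvSf : v ∉ Sf := (mem_sdiff.mp hvlow).2
    have hve : v ∈ e := (mem_sdiff.mp hvlow).1
    have hseed := hX v hvSf hvX
    push_neg at hseed
    have hseed1 := hseed e (hBH heB) f (hBH hfB) hef hve hvf
    have hseed2 := hseed f (hBH hfB) e (hBH heB) (Ne.symm hef) hvf hve
    -- pick x0 in (e \ Sf).erase v
    have hx0ex : ((e \ Sf).erase v).Nonempty := by
      rw [← card_pos, card_erase_of_mem hvlow]
      have := hB2 e heB
      omega
    obtain ⟨x0, hx0⟩ := hx0ex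
    have hx0v : x0 ≠ v := ne_of_mem_erase hx0
    have hx0low : x0 ∈ e \ Sf := mem_of_mem_erase hx0
    -- f \ Sf ⊆ {v, x0}
    have hfsub : f \ Sf ⊆ insert v {x0} := by
      intro z hz
      by_cases hzv : z = v
      · rw [hzv]; exact mem_insert_self _ _
      · have := hseed1 x0 hx0low hx0v z hz hzv
        rw [mem_insert, mem_singleton]
        exact Or.inr this
    have hvflow : v ∈ f \ Sf := mem_sdiff.mpr ⟨hvf, hvSf⟩
    have hpaircard : (insert v ({x0} : Finset V)).card = 2 := by
      rw [card_insert_of_notMem (by simp [Ne.symm hx0v]), card_singleton]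
    have hfeq : f \ Sf = insert v {x0} := by
      apply eq_of_subset_of_card_le hfsub
      rw [hpaircard]
      exact hB2 f hfB
    -- e \ Sf ⊆ {v, x0}
    have hesub : e \ Sf ⊆ insert v {x0} := by
      intro z hz
      by_cases hzv : z = v
      · rw [hzv]; exact mem_insert_self _ _
      · have hx0f : x0 ∈ f \ Sf := by rw [hfeq]; simp
        have := hseed2 x0 hx0f hx0v z hz hzv
        rw [mem_insert, mem_singleton]
        exact Or.inr this
    have heeq : e \ Sf = insert v {x0} := by
      apply eq_of_subset_of_card_le hesub
      rw [hpaircard]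
      exact hB2 e heB
    constructor
    · rw [heeq, hpaircard]
    · rw [heeq, hfeq]
  -- split B
  set BX := B.filter (fun e => ¬ Disjoint (e \ Sf) X) with hBX
  set B' := B \ BX with hB'
  have hBXcard : BX.card ≤ X.card * d0 := by
    have hsub : BX ⊆ X.biUnion (fun v => H.filter (fun e => v ∈ e)) := by
      intro e he
      rw [hBX, mem_filter] at he
      obtain ⟨v, hv1, hv2⟩ := Finset.not_disjoint_iff.mp he.2
      exact mem_biUnion.mpr ⟨v, hv2, mem_filter.mpr ⟨hBH he.1, (mem_sdiff.mp hv1).1⟩⟩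
    calc BX.card ≤ _ := card_le_card hsub
      _ ≤ ∑ v ∈ X, (H.filter (fun e => v ∈ e)).card := card_biUnion_le
      _ ≤ ∑ _v ∈ X, d0 := Finset.sum_le_sum (fun v hv => hlow v (hXSf v hv))
      _ = X.card * d0 := by rw [Finset.sum_const, smul_eq_mul]
  have hB'X : ∀ e ∈ B', ∀ v ∈ e \ Sf, v ∉ X := by
    intro e he v hv hvX
    rw [hB', mem_sdiff] at he
    apply he.2
    rw [hBX, mem_filter]
    exact ⟨he.1, Finset.not_disjoint_iff.mpr ⟨v, hv, hvX⟩⟩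
  set Bpair := B'.filter (fun e => ∃ f ∈ B, f ≠ e ∧ ¬ Disjoint (e \ Sf) (f \ Sf)) with hBp
  set Bpriv := B' \ Bpair with hBv
  -- private edges : disjoint low parts
  have hprivdis : ∀ e ∈ Bpriv, ∀ f ∈ Bpriv, e ≠ f → Disjoint (e \ Sf) (f \ Sf) := by
    intro e he f hf hef
    by_contra hc
    rw [hBv, mem_sdiff] at he
    have : e ∈ Bpair := by
      rw [hBp, mem_filter]
      refine ⟨he.1, f, ?_, Ne.symm hef, hc⟩
      rw [hBv, mem_sdiff, hB', mem_sdiff] at hf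
      exact hf.1.1
    exact he.2 this
  have hprivcard : 2 * Bpriv.card ≤ Fintype.card V := by
    have hsum : ∑ e ∈ Bpriv, (e \ Sf).card = (Bpriv.biUnion (fun e => e \ Sf)).card :=
      (card_biUnion (fun e he f hf hef => hprivdis e he f hf hef)).symm
    have h1 : 2 * Bpriv.card ≤ ∑ e ∈ Bpriv, (e \ Sf).card := by
      calc 2 * Bpriv.card = ∑ _e ∈ Bpriv, 2 := by rw [Finset.sum_const, smul_eq_mul, Nat.mul_comm]
        _ ≤ _ := Finset.sum_le_sum (fun e he => hB2 e (by
            rw [hBv, mem_sdiff, hB', mem_sdiff] at he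
            exact he.1.1))
    calc 2 * Bpriv.card ≤ _ := h1
      _ = _ := hsum
      _ ≤ Fintype.card V := by rw [← card_univ]; exact card_le_card (subset_univ _)
  -- pair edges
  have hpairK : ∀ e ∈ Bpair, (e \ Sf).card = 2 ∧
      ∀ f ∈ Bpair, ¬ Disjoint (e \ Sf) (f \ Sf) → e \ Sf = f \ Sf := by
    intro e he
    have heB' : e ∈ B' := (mem_filter.mp he).1
    have heB : e ∈ B := (mem_sdiff.mp heB').1
    obtain ⟨f0, hf0B, hf0ne, hf0dis⟩ := (mem_filter.mp he).2
    obtain ⟨v0, hv0e, hv0f⟩ := Finset.not_disjoint_iff.mp hf0dis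
    have hcard2 := (hK e heB f0 hf0B (Ne.symm hf0ne) v0 hv0e
      (hB'X e heB' v0 hv0e) (mem_sdiff.mp hv0f).1).1
    refine ⟨hcard2, ?_⟩
    intro f hf hdis
    by_cases hef : e = f
    · rw [hef]
    · obtain ⟨v, hv1, hv2⟩ := Finset.not_disjoint_iff.mp hdis
      have hfB : f ∈ B := (mem_sdiff.mp ((mem_filter.mp hf).1)).1
      exact (hK e heB f hfB hef v hv1 (hB'X e heB' v hv1) (mem_sdiff.mp hv2).1).2
  have hpaircount : 2 * Bpair.card ≤ Sf.card.choose (r-2) * Fintype.card V := by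
    set vals := Bpair.image (fun e => e \ Sf) with hvals
    have hvalsdis : ∀ L ∈ vals, ∀ L' ∈ vals, L ≠ L' → Disjoint L L' := by
      intro L hL L' hL' hne
      rw [hvals, mem_image] at hL hL'
      obtain ⟨e, he, rfl⟩ := hL
      obtain ⟨e', he', rfl⟩ := hL'
      by_contra hc
      exact hne ((hpairK e he).2 e' he' hc)
    have hvals2 : ∀ L ∈ vals, L.card = 2 := by
      intro L hL
      rw [hvals, mem_image] at hL
      obtain ⟨e, he, rfl⟩ := hL
      exact (hpairK e he).1
    have hvalscard : 2 * vals.card ≤ Fintype.card V := by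
      have hsum : ∑ L ∈ vals, L.card = (vals.biUnion id).card :=
        (card_biUnion (fun L hL L' hL' h => hvalsdis L hL L' hL' h)).symm
      have : ∑ L ∈ vals, L.card = 2 * vals.card := by
        rw [Finset.sum_congr rfl hvals2, Finset.sum_const, smul_eq_mul, Nat.mul_comm]
      rw [← this, hsum]
      rw [← card_univ]
      exact card_le_card (subset_univ _)
    have hfiber : ∀ L ∈ vals, (Bpair.filter (fun e => e \ Sf = L)).card
        ≤ Sf.card.choose (r-2) := by
      intro L hL
      have hmap : ∀ e ∈ Bpair.filter (fun e => e \ Sf = L),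
          e ∩ Sf ∈ Sf.powersetCard (r-2) := by
        intro e he
        rw [mem_filter] at he
        rw [mem_powersetCard]
        refine ⟨inter_subset_right, ?_⟩
        have h2 := (hpairK e he.1).1
        have hcc : (e \ Sf).card + (e ∩ Sf).card = e.card := card_sdiff_add_card_inter e Sf
        have her : e.card = r := huni e (hBH (mem_sdiff.mp ((mem_filter.mp he.1).1)).1)
        omega
      have hinj : ∀ e ∈ Bpair.filter (fun e => e \ Sf = L),
          ∀ f ∈ Bpair.filter (fun e => e \ Sf = L), e ∩ Sf = f ∩ Sf → e = f := by
        intro e he f hf h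
        rw [mem_filter] at he hf
        have he' : e = (e \ Sf) ∪ (e ∩ Sf) := (sdiff_union_inter e Sf).symm
        have hf' : f = (f \ Sf) ∪ (f ∩ Sf) := (sdiff_union_inter f Sf).symm
        rw [he', hf', he.2, hf.2, h]
      calc (Bpair.filter (fun e => e \ Sf = L)).card
          ≤ (Sf.powersetCard (r-2)).card := card_le_card_of_injOn _ hmap hinj
        _ = Sf.card.choose (r-2) := card_powersetCard _ _
    have hcnt : Bpair.card = ∑ L ∈ vals, (Bpair.filter (fun e => e \ Sf = L)).card := by
      apply card_eq_sum_card_fiberwise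
      intro e he
      rw [hvals]
      exact mem_image_of_mem _ he
    calc 2 * Bpair.card = 2 * ∑ L ∈ vals, (Bpair.filter (fun e => e \ Sf = L)).card := by
          rw [hcnt]
      _ ≤ 2 * ∑ _L ∈ vals, Sf.card.choose (r-2) := by
          apply Nat.mul_le_mul_left
          exact Finset.sum_le_sum hfiber
      _ = Sf.card.choose (r-2) * (2 * vals.card) := by
          rw [Finset.sum_const, smul_eq_mul]; ring
      _ ≤ Sf.card.choose (r-2) * Fintype.card V := Nat.mul_le_mul_left _ hvalscard
  -- degenerate case
  have hpairempty : Sf.card.choose (r-2) ≤ 1 → Bpair = ∅ := by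
    intro hq
    rw [eq_empty_iff_forall_notMem]
    intro e he
    have heB' : e ∈ B' := (mem_filter.mp he).1
    have heB : e ∈ B := (mem_sdiff.mp heB').1
    obtain ⟨f0, hf0B, hf0ne, hf0dis⟩ := (mem_filter.mp he).2
    obtain ⟨v0, hv0e, hv0f⟩ := Finset.not_disjoint_iff.mp hf0dis
    have hKe := hK e heB f0 hf0B (Ne.symm hf0ne) v0 hv0e
      (hB'X e heB' v0 hv0e) (mem_sdiff.mp hv0f).1
    -- e and f0 both lie in the fiber over L := e \ Sf
    have hcapE : e ∩ Sf ∈ Sf.powersetCard (r-2) := by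
      rw [mem_powersetCard]
      refine ⟨inter_subset_right, ?_⟩
      have hcc : (e \ Sf).card + (e ∩ Sf).card = e.card := card_sdiff_add_card_inter e Sf
      have her : e.card = r := huni e (hBH heB)
      have := hKe.1
      omega
    have hcapF : f0 ∩ Sf ∈ Sf.powersetCard (r-2) := by
      rw [mem_powersetCard]
      refine ⟨inter_subset_right, ?_⟩
      have hcc : (f0 \ Sf).card + (f0 ∩ Sf).card = f0.card := card_sdiff_add_card_inter f0 Sf
      have her : f0.card = r := huni f0 (hBH hf0B)
      have h2 : (f0 \ Sf).card = 2 := by rw [← hKe.2]; exact hKe.1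
      omega
    have hne : e ∩ Sf ≠ f0 ∩ Sf := by
      intro hc
      apply hf0ne
      have he' : e = (e \ Sf) ∪ (e ∩ Sf) := (sdiff_union_inter e Sf).symm
      have hf' : f0 = (f0 \ Sf) ∪ (f0 ∩ Sf) := (sdiff_union_inter f0 Sf).symm
      rw [hf', he', hKe.2, hc]
    have h2le : 2 ≤ (Sf.powersetCard (r-2)).card := by
      apply Finset.one_lt_card.mpr
      exact ⟨e ∩ Sf, hcapE, f0 ∩ Sf, hcapF, hne⟩
    rw [card_powersetCard] at h2le
    omega
  -- combine
  have hsplit : B.card = BX.card + Bpair.card + Bpriv.card := by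
    have h1 : BX ⊆ B := filter_subset _ _
    have h2 : B'.card = B.card - BX.card := by rw [hB']; exact card_sdiff_of_subset h1
    have h3 : Bpair ⊆ B' := filter_subset _ _
    have h4 : Bpriv.card = B'.card - Bpair.card := by rw [hBv]; exact card_sdiff_of_subset h3
    have h5 := card_le_card h1
    have h6 := card_le_card h3
    omega
  by_cases hq : Sf.card.choose (r-2) ≤ 1
  · rw [if_pos hq]
    have := hpairempty hq
    rw [this] at hsplit
    simp at hsplit
    omega
  · rw [if_neg hq]
    omega

end Structure

section Main
open Classical

lemma choose_gap (k r s : ℕ) (hk : 2 ≤ k) (hr2 : 2 ≤ r) (hrk : r ≤ k) (hs : s ≤ k - 2) :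
    s.choose (r-1) + 1 ≤ (k-1).choose (r-1) := by
  have e1 : k - 1 = (k-2) + 1 := by omega
  have e2 : r - 1 = (r-2) + 1 := by omega
  have h1 : s.choose (r-1) ≤ (k-2).choose (r-1) := Nat.choose_le_choose _ hs
  have h2 : (k-1).choose (r-1) = (k-2).choose (r-2) + (k-2).choose ((r-2)+1) := by
    rw [e1, e2, Nat.choose_succ_succ]
  have h3 : 0 < (k-2).choose (r-2) := Nat.choose_pos (by omega)
  rw [h2, ← e2]
  omega

lemma choose_gap2 (k r s : ℕ) (hk : 2 ≤ k) (hr2 : 2 ≤ r) (hrk : r ≤ k) (hs : s ≤ k - 2) :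
    s.choose (r-1) + s.choose (r-2) ≤ (k-1).choose (r-1) := by
  have e2 : r - 1 = (r-2) + 1 := by omega
  have h2 : (s+1).choose (r-1) = s.choose (r-2) + s.choose ((r-2)+1) := by
    rw [e2, Nat.choose_succ_succ]
  have h1 : (s+1).choose (r-1) ≤ (k-1).choose (r-1) := Nat.choose_le_choose _ (by omega)
  rw [← e2] at h2
  omega

/-- The main upper bound. -/
theorem upper_bound (k r t n : ℕ) (hk : 2 ≤ k) (hr2 : 2 ≤ r) (hrk : r ≤ k)
    (ht1 : 1 ≤ t) (htk : t ≤ k)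
    (hn : 2 * k.choose r + 2 * ((k-1).choose (r-1) * k)
      + 3 * k * r * (2 ^ (10 * k + 3) + 5 * k + 2)
      + 2 * (k * (3 * ((2 ^ (10 * k + 3) + 5 * k + 2) * r + 1) + 2 * r)
          + (2 * k * ((2 ^ (10 * k + 3) + 5 * k + 2) * r + 1) + k * r))
        * (2 ^ (10 * k + 3) + 5 * k + 2)
      + 2 * k + 10 ≤ n)
    (H : Finset (Finset (Fin n)))
    (huni : ∀ e ∈ H, e.card = r)
    (hfree : ¬ IsBergeCopy (FG t (k - t)) H) :
    H.card ≤ (k-1).choose (r-1) * (n - k + 1) + (k-1).choose r := by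
  classical
  set dbig := 2 ^ (10 * k + 3) + 5 * k + 2 with hdbig
  set cB := 3 * k * r * dbig with hcB
  set cX := k * (3 * (dbig * r + 1) + 2 * r) + (2 * k * (dbig * r + 1) + k * r) with hcX
  have hkn : k ≤ n := by
    have h1 : 2 * k ≤ n := by omega
    omega
  set Sf := (univ : Finset (Fin n)).filter (fun v => dbig ≤ degH H v) with hSf
  have huni' : ∀ e ∈ H, e.card ≤ r := fun e he => le_of_eq (huni e he)
  have hlow : ∀ v, v ∉ Sf → degH H v ≤ dbig := by
    intro v hv
    rw [hSf, mem_filter] at hv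
    push_neg at hv
    exact le_of_lt (hv (mem_univ v))
  have hSdeg : ∀ v ∈ Sf, 2 ^ (10 * (t + (k - t)) + 3) + 5 * (t + (k - t)) + 2 ≤ degH H v := by
    intro v hv
    rw [hSf, mem_filter] at hv
    have htu : t + (k - t) = k := by omega
    rw [htu]
    exact hv.2
  -- Step 1: Sf is small
  have hSle : Sf.card ≤ k - 1 := by
    by_contra hc
    push_neg at hc
    apply hfree
    refine MGL H t (k-t) r dbig Sf huni' hlow hSdeg ∅ (empty_subset H)
      (fun e he => absurd he (notMem_empty e))
      (fun e he => absurd he (notMem_empty e)) ∅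
      (fun v hv => absurd hv (notMem_empty v)) 0 0 (Nat.zero_le t) (Nat.zero_le (k-t))
      ?_ (Or.inl rfl) (Or.inl rfl)
    have : t - 0 + (k - t - 0) = k := by omega
    omega
  have hSk2 : Sf.card ≤ k - 2 ∨ Sf.card = k - 1 := by omega
  -- Step 2: scattered family
  set B := H.filter (fun e => 2 ≤ (e \ Sf).card) with hBdef
  obtain ⟨P, hPB, hPdisj, hBbound⟩ := scattered_family H B Sf r dbig (filter_subset _ _)
    (fun e he => by have := (mem_filter.mp he).2; omega) huni' hlow
  have hPH : P ⊆ H := hPB.trans (filter_subset _ _)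
  have hP2 : ∀ e ∈ P, 2 ≤ (e \ Sf).card := fun e he => (mem_filter.mp (hPB he)).2
  -- X set
  set X := (univ : Finset (Fin n)).filter (fun v => v ∉ Sf ∧ ∃ e, e ∈ H ∧ ∃ f, f ∈ H ∧
    e ≠ f ∧ v ∈ e ∧ v ∈ f ∧ ∃ x, x ∈ e \ Sf ∧ x ≠ v ∧ ∃ z, z ∈ f \ Sf ∧ z ≠ v ∧ z ≠ x)
    with hXdef
  have hXprop : ∀ v ∈ X, v ∉ Sf ∧ ∃ e, e ∈ H ∧ ∃ f, f ∈ H ∧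
      e ≠ f ∧ v ∈ e ∧ v ∈ f ∧ ∃ x, x ∈ e \ Sf ∧ x ≠ v ∧ ∃ z, z ∈ f \ Sf ∧ z ≠ v ∧ z ≠ x :=
    fun v hv => (mem_filter.mp hv).2
  have hXcompl : ∀ v, v ∉ Sf → v ∉ X →
      ¬ (∃ e, e ∈ H ∧ ∃ f, f ∈ H ∧ e ≠ f ∧ v ∈ e ∧ v ∈ f ∧
        ∃ x, x ∈ e \ Sf ∧ x ≠ v ∧ ∃ z, z ∈ f \ Sf ∧ z ≠ v ∧ z ≠ x) := by
    intro v hvSf hvX hseed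
    exact hvX (mem_filter.mpr ⟨mem_univ v, hvSf, hseed⟩)
  have hpart := partition_count H Sf r (by omega) huni
  rw [Fintype.card_fin] at hpart
  rw [← hBdef] at hpart
  have hC1 : 1 ≤ (k-1).choose (r-1) := Nat.choose_pos (by omega)
  have hCsr : Sf.card.choose r ≤ k.choose r := Nat.choose_le_choose r (by omega)
  rcases hSk2 with hs2 | hs1
  · -- case Sf.card ≤ k - 2
    have hgap := choose_gap k r Sf.card hk hr2 hrk hs2
    by_cases hPbig : 3 * t - 2 ≤ P.card
    · by_cases hst : k - t ≤ Sf.card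
      · exfalso
        apply hfree
        refine MGL H t (k-t) r dbig Sf huni' hlow hSdeg P hPH hP2 hPdisj X hXprop
          t 0 le_rfl (Nat.zero_le _) ?_ (Or.inr hPbig) (Or.inl rfl)
        have : t - t = 0 := by omega
        omega
      · push_neg at hst
        by_cases hXbig : (k - t - Sf.card) * (3 * (dbig * r + 1) + 2 * r)
            + (2 * t * (dbig * r + 1) + t * r) ≤ X.card
        · exfalso
          apply hfree
          refine MGL H t (k-t) r dbig Sf huni' hlow hSdeg P hPH hP2 hPdisj X hXprop
            t (k - t - Sf.card) le_rfl (by omega) ?_ (Or.inr hPbig) (Or.inr hXbig)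
          have h1 : t - t = 0 := by omega
          have h2 : k - t - (k - t - Sf.card) = Sf.card := by omega
          omega
        · -- structural case
          push_neg at hXbig
          have hXle : X.card ≤ cX := by
            have m1 : (k - t - Sf.card) * (3 * (dbig * r + 1) + 2 * r)
                ≤ k * (3 * (dbig * r + 1) + 2 * r) := Nat.mul_le_mul_right _ (by omega)
            have m2 : 2 * t * (dbig * r + 1) ≤ 2 * k * (dbig * r + 1) :=
              Nat.mul_le_mul_right _ (by omega)
            have m3 : t * r ≤ k * r := Nat.mul_le_mul_right _ htk
            omega
          have hstruct := B_structure H Sf X r dbig huni hlow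
            (fun v hv => (hXprop v hv).1) hXcompl
          rw [Fintype.card_fin] at hstruct
          rw [← hBdef] at hstruct
          have hendgame : ∀ qq : ℕ,
              2 * B.card ≤ 2 * (X.card * dbig) + qq * n + n →
              2 * Sf.card.choose (r-1) + qq + 2 ≤ 2 * ((k-1).choose (r-1)) →
              H.card ≤ (k-1).choose (r-1) * (n - k + 1) + (k-1).choose r := by
            intro qq hstruct' hcoef
            have hb1 : Sf.card.choose (r-1) * (n - Sf.card) ≤ Sf.card.choose (r-1) * n :=
              Nat.mul_le_mul_left _ (Nat.sub_le n _)
            have hb2 : X.card * dbig ≤ cX * dbig := Nat.mul_le_mul_right _ hXle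
            have hlink1 : 2 * cX * dbig = 2 * (cX * dbig) := by ring
            have hb3 : (2 * Sf.card.choose (r-1) + qq + 1) * n
                ≤ (2 * ((k-1).choose (r-1)) - 1) * n :=
              Nat.mul_le_mul_right _ (by omega)
            have hb4 : (2 * Sf.card.choose (r-1) + qq + 1) * n
                = 2 * (Sf.card.choose (r-1) * n) + qq * n + n := by ring
            have hb5 : (2 * ((k-1).choose (r-1)) - 1) * n
                = (2 * ((k-1).choose (r-1)) - 1) * (n - k + 1)
                  + (2 * ((k-1).choose (r-1)) - 1) * (k - 1) := by
              rw [← Nat.mul_add]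
              congr 1
              omega
            have hb6 : (2 * ((k-1).choose (r-1)) - 1) * (k - 1)
                ≤ 2 * ((k-1).choose (r-1) * k) := by
              calc (2 * ((k-1).choose (r-1)) - 1) * (k - 1)
                  ≤ (2 * ((k-1).choose (r-1))) * k := Nat.mul_le_mul (by omega) (by omega)
                _ = 2 * ((k-1).choose (r-1) * k) := by ring
            have hb7 : (2 * ((k-1).choose (r-1)) - 1) * (n - k + 1)
                = 2 * ((k-1).choose (r-1)) * (n - k + 1) - (n - k + 1) :=
              Nat.sub_one_mul _ _
            have hb8 : (n - k + 1) ≤ 2 * ((k-1).choose (r-1)) * (n - k + 1) :=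
              Nat.le_mul_of_pos_left _ (by omega)
            have hb9 : 2 * ((k-1).choose (r-1)) * (n - k + 1)
                = 2 * ((k-1).choose (r-1) * (n - k + 1)) := by ring
            omega
          by_cases hqq : Sf.card.choose (r-2) ≤ 1
          · rw [if_pos hqq] at hstruct
            exact hendgame 0 (by omega) (by omega)
          · rw [if_neg hqq] at hstruct
            have := choose_gap2 k r Sf.card hk hr2 hrk hs2
            exact hendgame (Sf.card.choose (r-2)) hstruct (by omega)
    · -- P small
      push_neg at hPbig
      have hBsmall : B.card ≤ cB := by
        have h1 : P.card * r * dbig ≤ (3 * k) * r * dbig := by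
          apply Nat.mul_le_mul_right
          apply Nat.mul_le_mul_right
          omega
        have h2 : (3 * k) * r * dbig = cB := by rw [hcB]
        omega
      have hb1 : Sf.card.choose (r-1) * (n - Sf.card)
          ≤ ((k-1).choose (r-1) - 1) * n := Nat.mul_le_mul (by omega) (Nat.sub_le n _)
      have hb2 : ((k-1).choose (r-1) - 1) * n
          = ((k-1).choose (r-1) - 1) * (n - k + 1) + ((k-1).choose (r-1) - 1) * (k - 1) := by
        rw [← Nat.mul_add]
        congr 1
        omega
      have hb3 : ((k-1).choose (r-1) - 1) * (k - 1) ≤ (k-1).choose (r-1) * k :=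
        Nat.mul_le_mul (by omega) (by omega)
      have hb4 : ((k-1).choose (r-1) - 1) * (n - k + 1)
          = (k-1).choose (r-1) * (n - k + 1) - (n - k + 1) := Nat.sub_one_mul _ _
      have hb5 : (n - k + 1) ≤ (k-1).choose (r-1) * (n - k + 1) :=
        Nat.le_mul_of_pos_left _ (by omega)
      omega
  · -- case Sf.card = k - 1 : exact bound
    have hP0 : P.card = 0 := by
      by_contra hc
      apply hfree
      refine MGL H t (k-t) r dbig Sf huni' hlow hSdeg P hPH hP2 hPdisj X hXprop
        1 0 ht1 (Nat.zero_le _) ?_ (Or.inr (by omega)) (Or.inl rfl)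
      have : t - 1 + (k - t - 0) = k - 1 := by omega
      omega
    have hB0 : B.card = 0 := by
      have := hBbound
      rw [hP0] at this
      simpa using this
    rw [hs1, hB0] at hpart
    have hrw : n - (k - 1) = n - k + 1 := by omega
    rw [hrw] at hpart
    omega

end Main

section Lower

/-- The extremal construction: all `r`-sets with at least `r-1` vertices inside a fixed
`(k-1)`-set. -/
theorem lower_bound (k r t n : ℕ) (hk : 2 ≤ k) (hr2 : 2 ≤ r) (hrk : r ≤ k)
    (ht1 : 1 ≤ t) (htk : t ≤ k) (hn : 2 * k + r ≤ n) :
    ∃ H : Finset (Finset (Fin n)), (∀ e ∈ H, e.card = r) ∧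
      ¬ IsBergeCopy (FG t (k - t)) H ∧
      H.card = (k-1).choose (r-1) * (n - k + 1) + (k-1).choose r := by
  classical
  set K : Finset (Fin n) := Finset.filter (fun v : Fin n => (v : ℕ) < k - 1) Finset.univ
    with hK
  have hKcard : K.card = k - 1 := by
    apply Finset.card_eq_of_bijective (fun i h => (⟨i, by omega⟩ : Fin n))
    · intro a ha
      rw [hK, mem_filter] at ha
      exact ⟨a.1, ha.2, Fin.ext rfl⟩
    · intro i h
      rw [hK, mem_filter]
      exact ⟨mem_univ _, h⟩
    · intro i j hi hj hij
      have := congrArg Fin.val hij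
      simpa using this
  set H := (univ.powersetCard r : Finset (Finset (Fin n))).filter
    (fun e => (e \ K).card ≤ 1) with hH
  have huni : ∀ e ∈ H, e.card = r := by
    intro e he
    rw [hH, mem_filter, mem_powersetCard] at he
    exact he.1.2
  refine ⟨H, huni, ?_, ?_⟩
  · -- Berge-free
    rintro ⟨f, φ, finj, -, hmem⟩
    -- each component supplies a designated vertex in K
    have hedge1 : ∀ i : Fin t, s(Sum.inl (i,(0:Fin 2)), Sum.inl (i,(1:Fin 2)))
        ∈ (FG t (k-t)).edgeSet := by
      intro i
      rw [FG_edge_iff]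
      exact Or.inl ⟨i, rfl⟩
    have hedge2 : ∀ j : Fin (k-t), s(Sum.inr (j,(0:Fin 3)), Sum.inr (j,(1:Fin 3)))
        ∈ (FG t (k-t)).edgeSet := by
      intro j
      rw [FG_edge_iff]
      exact Or.inr ⟨j, Or.inl rfl⟩
    have hKmem : ∀ (e : Finset (Fin n)), e ∈ H → ∀ a b : Fin n, a ∈ e → b ∈ e → a ≠ b →
        a ∉ K → b ∈ K := by
      intro e he a b ha hb hab haK
      by_contra hbK
      have h2 : 2 ≤ (e \ K).card := by
        apply Finset.one_lt_card.mpr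
        exact ⟨a, mem_sdiff.mpr ⟨ha, haK⟩, b, mem_sdiff.mpr ⟨hb, hbK⟩, hab⟩
      rw [hH, mem_filter] at he
      omega
    set g : Fin t ⊕ Fin (k-t) → Fin n := fun c => match c with
      | Sum.inl i => if f (Sum.inl (i,0)) ∈ K then f (Sum.inl (i,0)) else f (Sum.inl (i,1))
      | Sum.inr j => if f (Sum.inr (j,0)) ∈ K then f (Sum.inr (j,0)) else f (Sum.inr (j,1))
      with hg
    have hgK : ∀ c, g c ∈ K := by
      intro c
      rcases c with i | j
      · simp only [hg]
        split_ifs with h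
        · exact h
        · obtain ⟨hEH, hfmem⟩ := hmem _ (hedge1 i)
          refine hKmem _ hEH _ _ (hfmem _ ?_) (hfmem _ ?_) ?_ h
          · rw [Sym2.mem_iff]; exact Or.inl rfl
          · rw [Sym2.mem_iff]; exact Or.inr rfl
          · intro hc
            have := finj hc
            simp [Prod.ext_iff] at this
      · simp only [hg]
        split_ifs with h
        · exact h
        · obtain ⟨hEH, hfmem⟩ := hmem _ (hedge2 j)
          refine hKmem _ hEH _ _ (hfmem _ ?_) (hfmem _ ?_) ?_ h
          · rw [Sym2.mem_iff]; exact Or.inl rfl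
          · rw [Sym2.mem_iff]; exact Or.inr rfl
          · intro hc
            have := finj hc
            simp [Prod.ext_iff] at this
    have hginj : Function.Injective g := by
      intro c c' h
      rcases c with i | j <;> rcases c' with i' | j' <;> simp only [hg] at h
      · split_ifs at h with h1 h2 h2 <;>
        · have := finj h
          simp only [Sum.inl.injEq, Prod.mk.injEq] at this
          rw [this.1]
      · exfalso
        split_ifs at h with h1 h2 h2 <;>
        · have := finj h
          simp at this
      · exfalso
        split_ifs at h with h1 h2 h2 <;>
        · have := finj h
          simp at this
      · split_ifs at h with h1 h2 h2 <;>
        · have := finj h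
          simp only [Sum.inr.injEq, Prod.mk.injEq] at this
          rw [this.1]
    -- cardinality contradiction
    have hinj2 : Function.Injective (fun c => (⟨g c, hgK c⟩ : {x // x ∈ K})) := by
      intro c c' h
      apply hginj
      exact congrArg Subtype.val h
    have hcard := Fintype.card_le_of_injective _ hinj2
    rw [Fintype.card_sum, Fintype.card_fin, Fintype.card_fin, Fintype.card_coe,
      hKcard] at hcard
    omega
  · -- cardinality
    have hsplit := card_filter_add_card_filter_not
      (s := H) (p := fun e => (e \ K).card = 0)
    have hc0 : (H.filter (fun e => (e \ K).card = 0)).card = (k-1).choose r := by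
      have heq : H.filter (fun e => (e \ K).card = 0) = K.powersetCard r := by
        ext e
        rw [mem_filter, hH, mem_filter, mem_powersetCard, mem_powersetCard]
        constructor
        · rintro ⟨⟨⟨-, hcard⟩, -⟩, h0⟩
          refine ⟨fun x hx => ?_, hcard⟩
          by_contra hc
          have : x ∈ e \ K := mem_sdiff.mpr ⟨hx, hc⟩
          have := card_pos.mpr ⟨x, this⟩
          omega
        · rintro ⟨hsub, hcard⟩
          have h0 : e \ K = ∅ := sdiff_eq_empty_iff_subset.mpr hsub
          refine ⟨⟨⟨subset_univ e, hcard⟩, by rw [h0]; simp⟩, by rw [h0]; simp⟩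
      rw [heq, card_powersetCard, hKcard]
    have hc1 : (H.filter (fun e => ¬ (e \ K).card = 0)).card
        = (k-1).choose (r-1) * (n - k + 1) := by
      have heq : ∀ e ∈ H, ((e \ K).card = 0 → False) → (e \ K).card = 1 := by
        intro e he h0
        rw [hH, mem_filter] at he
        have h1 := he.2
        have h0' : (e \ K).card ≠ 0 := fun hc => h0 hc
        omega
      -- bijection with pairs
      have hbij : (H.filter (fun e => ¬ (e \ K).card = 0)).card
          = ((K.powersetCard (r-1)) ×ˢ ((univ \ K).powersetCard 1)).card := by
        apply Finset.card_bij' (fun e _ => (e ∩ K, e \ K))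
          (fun p _ => p.1 ∪ p.2)
        · intro e he
          rw [mem_filter] at he
          have h1 : (e \ K).card = 1 := heq e he.1 (fun hc => he.2 hc)
          rw [mem_product, mem_powersetCard, mem_powersetCard]
          dsimp only
          have hcc : (e \ K).card + (e ∩ K).card = e.card := card_sdiff_add_card_inter e K
          have her : e.card = r := huni e he.1
          refine ⟨⟨inter_subset_right, by omega⟩, ?_, h1⟩
          intro x hx
          rw [mem_sdiff] at hx ⊢
          exact ⟨mem_univ _, hx.2⟩
        · intro p hp
          rw [mem_product, mem_powersetCard, mem_powersetCard] at hp
          obtain ⟨⟨hp1, hp1c⟩, hp2, hp2c⟩ := hp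
          have hdisjp : Disjoint p.1 p.2 := by
            rw [Finset.disjoint_left]
            intro a ha hc
            exact (mem_sdiff.mp (hp2 hc)).2 (hp1 ha)
          have hcup : (p.1 ∪ p.2).card = r := by
            rw [card_union_of_disjoint hdisjp]
            omega
          have hsd : (p.1 ∪ p.2) \ K = p.2 := by
            ext x
            rw [mem_sdiff, mem_union]
            constructor
            · rintro ⟨hx1 | hx2, hxK⟩
              · exact absurd (hp1 hx1) hxK
              · exact hx2
            · intro hx
              exact ⟨Or.inr hx, (mem_sdiff.mp (hp2 hx)).2⟩
          rw [mem_filter, hH, mem_filter, mem_powersetCard]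
          refine ⟨⟨⟨subset_univ _, hcup⟩, by rw [hsd]; omega⟩, by rw [hsd]; omega⟩
        · intro e he
          rw [mem_filter] at he
          rw [union_comm]
          exact sdiff_union_inter e K
        · intro p hp
          rw [mem_product, mem_powersetCard, mem_powersetCard] at hp
          obtain ⟨⟨hp1, hp1c⟩, hp2, hp2c⟩ := hp
          have h1 : (p.1 ∪ p.2) ∩ K = p.1 := by
            ext x
            rw [mem_inter, mem_union]
            constructor
            · rintro ⟨hx1 | hx2, hxK⟩
              · exact hx1
              · exact absurd hxK (mem_sdiff.mp (hp2 hx2)).2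
            · intro hx
              exact ⟨Or.inl hx, hp1 hx⟩
          have h2 : (p.1 ∪ p.2) \ K = p.2 := by
            ext x
            rw [mem_sdiff, mem_union]
            constructor
            · rintro ⟨hx1 | hx2, hxK⟩
              · exact absurd (hp1 hx1) hxK
              · exact hx2
            · intro hx
              exact ⟨Or.inr hx, (mem_sdiff.mp (hp2 hx)).2⟩
          rw [h1, h2]
      rw [hbij, card_product, card_powersetCard, card_powersetCard, hKcard,
        card_sdiff_of_subset (subset_univ K), card_univ, Fintype.card_fin, hKcard,
        Nat.choose_one_right]
      have : n - (k - 1) = n - k + 1 := by omega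
      rw [this]
    omega

end Lower


theorem ex_berge_matching_union_stars (k r t : ℕ) (hk : 2 ≤ k) (hr2 : 2 ≤ r)
    (hrk : r ≤ k) (ht1 : 1 ≤ t) (htk : t ≤ k) :
    ∃ N, ∀ n ≥ N,
      exBerge r n ((matchingG t).sum (starsG (k - t) 2)) =
        (k - 1).choose (r - 1) * (n - k + 1) + (k - 1).choose r := by
  refine ⟨(2 * k.choose r + 2 * ((k-1).choose (r-1) * k)
      + 3 * k * r * (2 ^ (10 * k + 3) + 5 * k + 2)
      + 2 * (k * (3 * ((2 ^ (10 * k + 3) + 5 * k + 2) * r + 1) + 2 * r)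
          + (2 * k * ((2 ^ (10 * k + 3) + 5 * k + 2) * r + 1) + k * r))
        * (2 ^ (10 * k + 3) + 5 * k + 2)
      + 2 * k + 10) + 2 * k + r, fun n hn => ?_⟩
  have hupper : ∀ m ∈ {m | ∃ H : Finset (Finset (Fin n)),
      (∀ e ∈ H, e.card = r) ∧ ¬ IsBergeCopy ((matchingG t).sum (starsG (k - t) 2)) H ∧
      H.card = m}, m ≤ (k - 1).choose (r - 1) * (n - k + 1) + (k - 1).choose r := by
    rintro m ⟨H, h1, h2, rfl⟩
    exact upper_bound k r t n hk hr2 hrk ht1 htk (by omega) H h1 h2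
  obtain ⟨H0, hu0, hf0, hc0⟩ := lower_bound k r t n hk hr2 hrk ht1 htk (by omega)
  have hmem : ((k - 1).choose (r - 1) * (n - k + 1) + (k - 1).choose r) ∈
      {m | ∃ H : Finset (Finset (Fin n)),
      (∀ e ∈ H, e.card = r) ∧ ¬ IsBergeCopy ((matchingG t).sum (starsG (k - t) 2)) H ∧
      H.card = m} := ⟨H0, hu0, hf0, hc0⟩
  apply le_antisymm
  · exact csSup_le ⟨_, hmem⟩ hupper
  · exact le_csSup ⟨_, hupper⟩ hmem
end

section
/- Let k ≥ 2, ℓ₁ ≥ 3, ℓ₂ ≥ 2 and r ≥ ℓ₁ + ℓ₂ + k - 1 be integers, and set ℓ_min = min{ℓ₁, ℓ₂}. For sufficiently large n, there exists an n-vertex r-uniform hypergraph with (ℓ_min - 1)·⌊(n-k+1)/(r-k+2)⌋ hyperedges that contains no Berge copy of P_{ℓ₁} ∪ (k-1)S_{ℓ₂}. Hence ex_r(n, Berge-P_{ℓ₁} ∪ (k-1)S_{ℓ₂}) ≥ (ℓ_min - 1)·⌊(n-k+1)/(r-k+2)⌋. -/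
open Finset

lemma chainEq (g : ℕ → ℕ) (m : ℕ) (h : ∀ i, i + 1 < m → g i = g (i + 1)) :
    ∀ i < m, g i = g 0 := by
  intro i hi
  induction i with
  | zero => rfl
  | succ i ih => rw [← h i hi]; exact ih (by omega)

lemma decodeCT {s c t c' t' : ℕ} (ht : t < s) (ht' : t' < s)
    (h : c * s + t = c' * s + t') : c = c' ∧ t = t' := by
  have hcc : c = c' := by
    rcases Nat.lt_trichotomy c c' with hlt | he | hgt
    · exfalso
      have h2 : (c + 1) * s ≤ c' * s := Nat.mul_le_mul_right s hlt
      rw [add_one_mul] at h2; linarith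
    · exact he
    · exfalso
      have h2 : (c' + 1) * s ≤ c * s := Nat.mul_le_mul_right s hgt
      rw [add_one_mul] at h2; linarith
  subst hcc
  exact ⟨rfl, Nat.add_left_cancel h⟩

def iota (n : ℕ) (hn : 0 < n) : ℕ → Fin n := fun m => if h : m < n then ⟨m, h⟩ else ⟨0, hn⟩

lemma iota_inj {n : ℕ} (hn : 0 < n) {a b : ℕ} (ha : a < n) (hb : b < n)
    (h : iota n hn a = iota n hn b) : a = b := by
  simpa [iota, dif_pos ha, dif_pos hb, Fin.ext_iff] using h

def E0 (k s c j : ℕ) : Finset ℕ :=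
  range (k - 1) ∪ ((range s).erase j).image (fun t => k - 1 + c * s + t)

lemma mem_E0 {k s c j m : ℕ} :
    m ∈ E0 k s c j ↔ m < k - 1 ∨ ∃ t, t < s ∧ t ≠ j ∧ m = k - 1 + c * s + t := by
  simp only [E0, mem_union, mem_image, mem_erase, mem_range]
  constructor
  · rintro (h | ⟨t, ⟨h1, h2⟩, h3⟩)
    · exact Or.inl h
    · exact Or.inr ⟨t, h2, h1, h3.symm⟩
  · rintro (h | ⟨t, h1, h2, h3⟩)
    · exact Or.inl h
    · exact Or.inr ⟨t, ⟨h2, h1⟩, h3.symm⟩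

lemma card_E0 {k s c j : ℕ} (hj : j < s) : (E0 k s c j).card = (k - 1) + (s - 1) := by
  rw [E0, card_union_of_disjoint, card_range,
    card_image_of_injective _ (add_right_injective (k - 1 + c * s)),
    card_erase_of_mem (mem_range.2 hj), card_range]
  rw [disjoint_left]
  intro a ha hb
  rw [mem_range] at ha
  simp only [mem_image, mem_erase, mem_range] at hb
  obtain ⟨t, _, h3⟩ := hb
  omega

lemma E0_bound {k s c j m q : ℕ} (hc : c < q) (hm : m ∈ E0 k s c j) :
    m < k - 1 + q * s := by
  rw [mem_E0] at hm
  have hq : q * s ≥ (c + 1) * s := Nat.mul_le_mul_right s hc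
  rw [add_one_mul] at hq
  rcases hm with h | ⟨t, h1, _, h3⟩
  · have : 0 ≤ q * s := Nat.zero_le _
    omega
  · subst h3; linarith

def Ee (n k s : ℕ) (hn : 0 < n) (c j : ℕ) : Finset (Fin n) :=
  (E0 k s c j).image (iota n hn)

lemma card_Ee {n k s q c j : ℕ} (hn : 0 < n) (hc : c < q) (hj : j < s)
    (hqn : k - 1 + q * s ≤ n) : (Ee n k s hn c j).card = (k - 1) + (s - 1) := by
  rw [Ee, card_image_of_injOn, card_E0 hj]
  intro a ha b hb hab
  exact iota_inj hn (lt_of_lt_of_le (E0_bound hc ha) hqn)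
    (lt_of_lt_of_le (E0_bound hc hb) hqn) hab

lemma Ee_eq_E0_eq {n k s q c j c' j' : ℕ} (hn : 0 < n) (hc : c < q) (hc' : c' < q)
    (hqn : k - 1 + q * s ≤ n) (h : Ee n k s hn c j = Ee n k s hn c' j') :
    E0 k s c j = E0 k s c' j' := by
  ext m
  constructor
  · intro hm
    have h1 : iota n hn m ∈ Ee n k s hn c' j' := by
      rw [← h]; exact mem_image_of_mem _ hm
    obtain ⟨m', hm', he⟩ := mem_image.1 h1
    rwa [iota_inj hn (lt_of_lt_of_le (E0_bound hc' hm') hqn)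
      (lt_of_lt_of_le (E0_bound hc hm) hqn) he] at hm'
  · intro hm
    have h1 : iota n hn m ∈ Ee n k s hn c j := by
      rw [h]; exact mem_image_of_mem _ hm
    obtain ⟨m', hm', he⟩ := mem_image.1 h1
    rwa [iota_inj hn (lt_of_lt_of_le (E0_bound hc hm') hqn)
      (lt_of_lt_of_le (E0_bound hc' hm) hqn) he] at hm'

lemma E0_inj {k s q c j c' j' : ℕ} (hs : 2 ≤ s) (hc : c < q) (hc' : c' < q)
    (hj : j < s) (hj' : j' < s) (h : E0 k s c j = E0 k s c' j') : c = c' ∧ j = j' := by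
  set t₀ : ℕ := if j = 0 then 1 else 0 with ht₀
  have ht₀s : t₀ < s := by rw [ht₀]; split <;> omega
  have ht₀j : t₀ ≠ j := by rw [ht₀]; split <;> omega
  have hw : (k - 1 + c * s + t₀) ∈ E0 k s c j := mem_E0.2 (Or.inr ⟨t₀, ht₀s, ht₀j, rfl⟩)
  rw [h, mem_E0] at hw
  rcases hw with hw | ⟨t', h1, h2, h3⟩
  · omega
  · obtain ⟨hcc, -⟩ := decodeCT ht₀s h1 (by omega : c * s + t₀ = c' * s + t')
    subst hcc
    refine ⟨rfl, ?_⟩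
    by_contra hjj
    have hw2 : (k - 1 + c * s + j') ∈ E0 k s c j :=
      mem_E0.2 (Or.inr ⟨j', hj', fun hx => hjj hx.symm, rfl⟩)
    rw [h, mem_E0] at hw2
    rcases hw2 with hw2 | ⟨t'', h1', h2', h3'⟩
    · omega
    · obtain ⟨-, htt⟩ := decodeCT hj' h1' (by omega : c * s + j' = c * s + t'')
      exact h2' htt.symm

/-- vertices in two hyperedges of different classes lie in the core `A`. -/
lemma Ee_inter {n k s q c j c' j' : ℕ} (hn : 0 < n) (hc : c < q) (hc' : c' < q)
    (hqn : k - 1 + q * s ≤ n) (hcc : c ≠ c') {v : Fin n}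
    (h1 : v ∈ Ee n k s hn c j) (h2 : v ∈ Ee n k s hn c' j') :
    v ∈ (range (k - 1)).image (iota n hn) := by
  obtain ⟨m, hm, rfl⟩ := mem_image.1 h1
  obtain ⟨m', hm', he⟩ := mem_image.1 h2
  have hmm : m' = m := iota_inj hn (lt_of_lt_of_le (E0_bound hc' hm') hqn)
    (lt_of_lt_of_le (E0_bound hc hm) hqn) he
  subst hmm
  rw [mem_E0] at hm hm'
  rcases hm with hm | ⟨t, ht1, ht2, ht3⟩
  · exact mem_image_of_mem _ (mem_range.2 hm)
  rcases hm' with hm' | ⟨t', ht1', ht2', ht3'⟩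
  · exact mem_image_of_mem _ (mem_range.2 hm')
  exact absurd (decodeCT ht1 ht1' (by omega : c * s + t = c' * s + t')).1 hcc

theorem construction (k ℓ₁ ℓ₂ r n : ℕ) (hk : 2 ≤ k)
    (h1 : 3 ≤ ℓ₁) (h2 : 2 ≤ ℓ₂) (hr : ℓ₁ + ℓ₂ + k - 1 ≤ r) (hn : k ≤ n) :
    ∃ H : Finset (Finset (Fin n)), (∀ e ∈ H, e.card = r) ∧
      ¬ IsBergeCopy ((pathG ℓ₁).sum (starsG (k - 1) ℓ₂)) H ∧
      H.card = (min ℓ₁ ℓ₂ - 1) * ((n - k + 1) / (r - k + 2)) := by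
  have hL1 : min ℓ₁ ℓ₂ ≤ ℓ₁ := min_le_left _ _
  have hL2 : min ℓ₁ ℓ₂ ≤ ℓ₂ := min_le_right _ _
  have hL0 : 2 ≤ min ℓ₁ ℓ₂ := le_min (by omega) h2
  set L : ℕ := min ℓ₁ ℓ₂ with hLdef
  set s : ℕ := r - k + 2 with hsdef
  set q : ℕ := (n - k + 1) / s with hqdef
  have hs2 : 2 ≤ s := by omega
  have hLs : L - 1 < s := by omega
  have hqs : q * s ≤ n - k + 1 := Nat.div_mul_le_self _ _
  have hqn : k - 1 + q * s ≤ n := by omega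
  have hn0 : 0 < n := by omega
  refine ⟨((range q) ×ˢ range (L - 1)).image (fun p => Ee n k s hn0 p.1 p.2), ?_, ?_, ?_⟩
  · -- uniformity
    intro e he
    obtain ⟨⟨c, j⟩, hp, rfl⟩ := mem_image.1 he
    rw [mem_product, mem_range, mem_range] at hp
    rw [card_Ee hn0 hp.1 (by omega) hqn]
    omega
  · -- no Berge copy
    rintro ⟨f, φ, hf, hφinj, hmem⟩
    set F := (pathG ℓ₁).sum (starsG (k - 1) ℓ₂) with hFdef
    set A : Finset (Fin n) := (range (k - 1)).image (iota n hn0) with hAdef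
    -- path vertices
    have hpv : ∀ i, i % (ℓ₁ + 1) < ℓ₁ + 1 := fun i => Nat.mod_lt _ (by omega)
    set pv : ℕ → Fin (ℓ₁ + 1) := fun i => ⟨i % (ℓ₁ + 1), hpv i⟩ with hpvdef
    have pv_val : ∀ i ≤ ℓ₁, (pv i : ℕ) = i := fun i hi => Nat.mod_eq_of_lt (by omega)
    set pe : ℕ → Sym2 (Fin (ℓ₁ + 1) ⊕ (Fin (k - 1) × Fin (ℓ₂ + 1))) :=
      fun i => s(Sum.inl (pv i), Sum.inl (pv (i + 1))) with hpedef
    have hpeE : ∀ i < ℓ₁, pe i ∈ F.edgeSet := by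
      intro i hi
      rw [SimpleGraph.mem_edgeSet]
      show (pathG ℓ₁).Adj (pv i) (pv (i + 1))
      rw [pathG, SimpleGraph.fromRel_adj]
      constructor
      · intro h
        have := congrArg Fin.val h
        rw [pv_val i (by omega), pv_val (i + 1) (by omega)] at this
        omega
      · left; rw [pv_val i (by omega), pv_val (i + 1) (by omega)]
    have hpe_inj : ∀ a < ℓ₁, ∀ b < ℓ₁, pe a = pe b → a = b := by
      intro a ha b hb h
      rw [hpedef, Sym2.eq_iff] at h
      rcases h with ⟨h1, -⟩ | ⟨h1, h2⟩
      · have := congrArg Fin.val (Sum.inl.inj h1)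
        rw [pv_val a (by omega), pv_val b (by omega)] at this
        exact this
      · have e1 := congrArg Fin.val (Sum.inl.inj h1)
        have e2 := congrArg Fin.val (Sum.inl.inj h2)
        rw [pv_val a (by omega), pv_val (b + 1) (by omega)] at e1
        rw [pv_val (a + 1) (by omega), pv_val b (by omega)] at e2
        omega
    -- representation of path hyperedges
    have hrepP : ∀ i, ∃ c j, i < ℓ₁ → (c < q ∧ j < L - 1 ∧ φ (pe i) = Ee n k s hn0 c j) := by
      intro i
      by_cases hi : i < ℓ₁
      · obtain ⟨he, -⟩ := hmem (pe i) (hpeE i hi)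
        obtain ⟨⟨c, j⟩, hp, hE⟩ := mem_image.1 he
        rw [mem_product, mem_range, mem_range] at hp
        exact ⟨c, j, fun _ => ⟨hp.1, hp.2, hE.symm⟩⟩
      · exact ⟨0, 0, fun h => absurd h hi⟩
    choose C J hCJ using hrepP
    -- not all path classes equal
    have hCne : ¬ (∀ i < ℓ₁, C i = C 0) := by
      intro hall
      have hsub : ∀ i ∈ range ℓ₁, φ (pe i) ∈ (range (L - 1)).image (Ee n k s hn0 (C 0)) := by
        intro i hi
        rw [mem_range] at hi
        obtain ⟨-, hJ, hE⟩ := hCJ i hi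
        rw [hE, ← hall i hi]
        exact mem_image_of_mem _ (mem_range.2 hJ)
      have hinj2 : Set.InjOn (fun i => φ (pe i)) (range ℓ₁) := by
        intro a ha b hb hab
        rw [coe_range, Set.mem_Iio] at ha hb
        exact hpe_inj a ha b hb (hφinj (hpeE a ha) (hpeE b hb) hab)
      have hle := Finset.card_le_card_of_injOn _ hsub hinj2
      have := card_image_le (f := Ee n k s hn0 (C 0)) (s := range (L - 1))
      rw [card_range] at hle
      rw [card_range] at this
      omega
    have hex : ∃ i, i + 1 < ℓ₁ ∧ C i ≠ C (i + 1) := by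
      by_contra hcon
      push_neg at hcon
      exact hCne (chainEq C ℓ₁ fun i hi => hcon i hi)
    obtain ⟨i₀, hi₀, hCne₀⟩ := hex
    -- the interior path vertex mapped into A
    have hApath : f (Sum.inl (pv (i₀ + 1))) ∈ A := by
      obtain ⟨hc1, hj1, hE1⟩ := hCJ i₀ (by omega)
      obtain ⟨hc2, hj2, hE2⟩ := hCJ (i₀ + 1) hi₀
      have hm1 : f (Sum.inl (pv (i₀ + 1))) ∈ φ (pe i₀) := by
        exact (hmem (pe i₀) (hpeE i₀ (by omega))).2 _ (Sym2.mem_mk_right _ _)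
      have hm2 : f (Sum.inl (pv (i₀ + 1))) ∈ φ (pe (i₀ + 1)) := by
        exact (hmem (pe (i₀ + 1)) (hpeE (i₀ + 1) hi₀)).2 _ (Sym2.mem_mk_left _ _)
      rw [hE1] at hm1
      rw [hE2] at hm2
      exact Ee_inter hn0 hc1 hc2 hqn hCne₀ hm1 hm2
    -- star centers mapped into A
    have hlv : ∀ t, (t + 1) % (ℓ₂ + 1) < ℓ₂ + 1 := fun t => Nat.mod_lt _ (by omega)
    set lv : ℕ → Fin (ℓ₂ + 1) := fun t => ⟨(t + 1) % (ℓ₂ + 1), hlv t⟩ with hlvdef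
    have lv_val : ∀ t < ℓ₂, (lv t : ℕ) = t + 1 := fun t ht => Nat.mod_eq_of_lt (by omega)
    have hAstar : ∀ jj : Fin (k - 1), f (Sum.inr (jj, 0)) ∈ A := by
      intro jj
      set se : ℕ → Sym2 (Fin (ℓ₁ + 1) ⊕ (Fin (k - 1) × Fin (ℓ₂ + 1))) :=
        fun t => s(Sum.inr (jj, 0), Sum.inr (jj, lv t)) with hsedef
      have hseE : ∀ t < ℓ₂, se t ∈ F.edgeSet := by
        intro t ht
        rw [SimpleGraph.mem_edgeSet]
        show (starsG (k - 1) ℓ₂).Adj (jj, 0) (jj, lv t)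
        rw [starsG, SimpleGraph.fromRel_adj]
        constructor
        · intro h
          have := congrArg (fun p => ((Prod.snd p : Fin (ℓ₂ + 1)) : ℕ)) h
          simp only at this
          rw [Fin.val_zero, lv_val t ht] at this
          omega
        · left; exact ⟨rfl, rfl⟩
      have hse_inj : ∀ a < ℓ₂, ∀ b < ℓ₂, se a = se b → a = b := by
        intro a ha b hb h
        rw [hsedef, Sym2.eq_iff] at h
        rcases h with ⟨-, h2⟩ | ⟨h1, -⟩
        · have := congrArg (fun p : Fin (ℓ₁ + 1) ⊕ (Fin (k - 1) × Fin (ℓ₂ + 1)) =>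
            ((Sum.getRight? p).map (fun x => (x.2 : ℕ))) ) h2
          simp only [Sum.getRight?, Option.map] at this
          rw [lv_val a ha,
            lv_val b hb] at this
          simp only [Option.some.injEq] at this
          omega
        · have := congrArg (fun p : Fin (ℓ₁ + 1) ⊕ (Fin (k - 1) × Fin (ℓ₂ + 1)) =>
            ((Sum.getRight? p).map (fun x => (x.2 : ℕ))) ) h1
          simp only [Sum.getRight?, Option.map] at this
          rw [lv_val b hb, Fin.val_zero] at this
          simp only [Option.some.injEq] at this
          omega
      have hrepS : ∀ t, ∃ c j, t < ℓ₂ → (c < q ∧ j < L - 1 ∧ φ (se t) = Ee n k s hn0 c j) := by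
        intro t
        by_cases ht : t < ℓ₂
        · obtain ⟨he, -⟩ := hmem (se t) (hseE t ht)
          obtain ⟨⟨c, j⟩, hp, hE⟩ := mem_image.1 he
          rw [mem_product, mem_range, mem_range] at hp
          exact ⟨c, j, fun _ => ⟨hp.1, hp.2, hE.symm⟩⟩
        · exact ⟨0, 0, fun h => absurd h ht⟩
      choose Cs Js hCsJs using hrepS
      have hCsne : ¬ (∀ t < ℓ₂, Cs t = Cs 0) := by
        intro hall
        have hsub : ∀ t ∈ range ℓ₂, φ (se t) ∈ (range (L - 1)).image (Ee n k s hn0 (Cs 0)) := by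
          intro t ht
          rw [mem_range] at ht
          obtain ⟨-, hJ, hE⟩ := hCsJs t ht
          rw [hE, ← hall t ht]
          exact mem_image_of_mem _ (mem_range.2 hJ)
        have hinj2 : Set.InjOn (fun t => φ (se t)) (range ℓ₂) := by
          intro a ha b hb hab
          rw [coe_range, Set.mem_Iio] at ha hb
          exact hse_inj a ha b hb (hφinj (hseE a ha) (hseE b hb) hab)
        have hle := Finset.card_le_card_of_injOn _ hsub hinj2
        have := card_image_le (f := Ee n k s hn0 (Cs 0)) (s := range (L - 1))
        rw [card_range] at hle
        rw [card_range] at this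
        omega
      have hex : ∃ t, t + 1 < ℓ₂ ∧ Cs t ≠ Cs (t + 1) := by
        by_contra hcon
        push_neg at hcon
        exact hCsne (chainEq Cs ℓ₂ fun t ht => hcon t ht)
      obtain ⟨t₀, ht₀, hCsne₀⟩ := hex
      obtain ⟨hc1, hj1, hE1⟩ := hCsJs t₀ (by omega)
      obtain ⟨hc2, hj2, hE2⟩ := hCsJs (t₀ + 1) ht₀
      have hm1 : f (Sum.inr (jj, 0)) ∈ φ (se t₀) :=
        (hmem (se t₀) (hseE t₀ (by omega))).2 _ (Sym2.mem_mk_left _ _)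
      have hm2 : f (Sum.inr (jj, 0)) ∈ φ (se (t₀ + 1)) :=
        (hmem (se (t₀ + 1)) (hseE (t₀ + 1) ht₀)).2 _ (Sym2.mem_mk_left _ _)
      rw [hE1] at hm1
      rw [hE2] at hm2
      exact Ee_inter hn0 hc1 hc2 hqn hCsne₀ hm1 hm2
    -- final counting contradiction
    have hcardA : A.card = k - 1 := by
      rw [hAdef, card_image_of_injOn, card_range]
      intro a ha b hb hab
      rw [coe_range, Set.mem_Iio] at ha hb
      exact iota_inj hn0 (by omega) (by omega) hab
    set T : Finset (Fin n) := insert (f (Sum.inl (pv (i₀ + 1))))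
      ((univ : Finset (Fin (k - 1))).image fun jj => f (Sum.inr (jj, 0))) with hTdef
    have hTsub : T ⊆ A := by
      intro v hv
      rw [hTdef, mem_insert] at hv
      rcases hv with rfl | hv
      · exact hApath
      · obtain ⟨jj, -, rfl⟩ := mem_image.1 hv
        exact hAstar jj
    have hTcard : T.card = k := by
      rw [hTdef, card_insert_of_notMem, card_image_of_injOn, card_univ, Fintype.card_fin]
      · omega
      · intro a _ b _ hab
        have := hf hab
        simpa using this
      · intro hmem'
        obtain ⟨jj, -, hj⟩ := mem_image.1 hmem'
        exact absurd (hf hj) (by simp)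
    have := Finset.card_le_card hTsub
    omega
  · -- cardinality
    rw [card_image_of_injOn, card_product, card_range, card_range, Nat.mul_comm]
    rintro ⟨c, j⟩ hp ⟨c', j'⟩ hp' heq
    simp only [coe_product, Set.mem_prod, mem_coe, mem_range] at hp hp'
    have hE0 := Ee_eq_E0_eq hn0 hp.1 hp'.1 hqn heq
    obtain ⟨hc, hj⟩ := E0_inj hs2 hp.1 hp'.1 (by omega) (by omega) hE0
    exact Prod.ext hc hj

theorem ex_berge_path_union_stars_lower (k ℓ₁ ℓ₂ r : ℕ) (hk : 2 ≤ k)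
    (h1 : 3 ≤ ℓ₁) (h2 : 2 ≤ ℓ₂) (hr : ℓ₁ + ℓ₂ + k - 1 ≤ r) :
    ∃ N, ∀ n ≥ N,
      (∃ H : Finset (Finset (Fin n)), (∀ e ∈ H, e.card = r) ∧
        ¬ IsBergeCopy ((pathG ℓ₁).sum (starsG (k - 1) ℓ₂)) H ∧
        H.card = (min ℓ₁ ℓ₂ - 1) * ((n - k + 1) / (r - k + 2))) ∧
      (min ℓ₁ ℓ₂ - 1) * ((n - k + 1) / (r - k + 2)) ≤
        exBerge r n ((pathG ℓ₁).sum (starsG (k - 1) ℓ₂)) := by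
  refine ⟨k, fun n hn => ?_⟩
  obtain ⟨H, hH1, hH2, hH3⟩ := construction k ℓ₁ ℓ₂ r n hk h1 h2 hr hn
  refine ⟨⟨H, hH1, hH2, hH3⟩, ?_⟩
  rw [exBerge]
  apply le_csSup
  · refine ⟨Fintype.card (Finset (Fin n)), ?_⟩
    rintro m ⟨H', _, _, rfl⟩
    exact Finset.card_le_univ H'
  · exact ⟨H, hH1, hH2, hH3⟩
end

section
/- Let F be a graph that contains at least one edge, and let k ≥ 2 and r ≥ k + |V(F)| be integers, where F is not a matching. For sufficiently large n, the maximum number of hyperedges in an n-vertex r-uniform hypergraph with no Berge copy of F ∪ M_{k-1} equals the maximum number of hyperedges in an n-vertex r-uniform hypergraph with no Berge copy of F; that is, ex_r(n, Berge-(F ∪ M_{k-1})) = ex_r(n, Berge-F). -/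
open Finset

/- ### Auxiliary lemmas ### -/


def sunBound (t : ℕ) : ℕ → ℕ
  | 0 => 0
  | (b+1) => t * (b+1) * (sunBound t b + 1)

lemma sunflower_lemma {V : Type*} [DecidableEq V] (t : ℕ) :
    ∀ (b : ℕ) (S : Finset (Finset V)), (∀ s ∈ S, s.Nonempty) → (∀ s ∈ S, s.card ≤ b) →
    sunBound t b < S.card →
    ∃ (K : Finset V) (E : Finset (Finset V)), E ⊆ S ∧ E.card = t ∧
      (∀ e ∈ E, K ⊆ e ∧ (e \ K).Nonempty) ∧
      (∀ e₁ ∈ E, ∀ e₂ ∈ E, e₁ ≠ e₂ → e₁ ∩ e₂ ⊆ K) := by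
  intro b
  induction b with
  | zero =>
    intro S hne hcard hbig
    exfalso
    have : S = ∅ := by
      rw [eq_empty_iff_forall_notMem]
      intro s hs
      have h1 := hne s hs
      have h2 := hcard s hs
      simp [Finset.card_eq_zero] at h2
      simp [h2] at h1
    simp [this, sunBound] at hbig
  | succ b ih =>
    intro S hne hcard hbig
    classical
    -- maximal pairwise-disjoint subfamily
    set D := S.powerset.filter (fun M => ∀ e₁ ∈ M, ∀ e₂ ∈ M, e₁ ≠ e₂ → e₁ ∩ e₂ = ∅) with hD
    have hDne : D.Nonempty := ⟨∅, by simp [hD]⟩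
    obtain ⟨M, hMD, hMmax⟩ := D.exists_max_image Finset.card hDne
    rw [hD, mem_filter, mem_powerset] at hMD
    obtain ⟨hMS, hMpd⟩ := hMD
    by_cases hMt : t ≤ M.card
    · obtain ⟨E, hES, hEcard⟩ := Finset.exists_subset_card_eq hMt
      refine ⟨∅, E, hES.trans hMS, hEcard, ?_, ?_⟩
      · intro e he
        refine ⟨empty_subset _, ?_⟩
        simpa using hne e (hMS (hES he))
      · intro e₁ h₁ e₂ h₂ hne12
        rw [hMpd e₁ (hES h₁) e₂ (hES h₂) hne12]
    · push_neg at hMt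
      set W := M.biUnion id with hW
      -- every member of S meets W
      have hmeet : ∀ s ∈ S, (s ∩ W).Nonempty := by
        intro s hs
        by_contra hcon
        rw [not_nonempty_iff_eq_empty] at hcon
        have hsM : s ∉ M := by
          intro hsM
          have : s ⊆ W := fun x hx => mem_biUnion.2 ⟨s, hsM, hx⟩
          have h1 := hne s hs
          obtain ⟨x, hx⟩ := h1
          have : x ∈ s ∩ W := mem_inter.2 ⟨hx, this hx⟩
          simp [hcon] at this
        have hins : insert s M ∈ D := by
          rw [hD, mem_filter, mem_powerset]
          refine ⟨insert_subset hs hMS, ?_⟩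
          have key : ∀ e ∈ M, s ∩ e = ∅ := by
            intro e heM
            rw [← subset_empty, ← hcon]
            intro y hy
            rw [mem_inter] at hy ⊢
            exact ⟨hy.1, mem_biUnion.2 ⟨e, heM, hy.2⟩⟩
          intro e₁ h₁ e₂ h₂ hne12
          rcases mem_insert.1 h₁ with rfl | h₁' <;> rcases mem_insert.1 h₂ with rfl | h₂'
          · exact absurd rfl hne12
          · exact key e₂ h₂'
          · rw [inter_comm]; exact key e₁ h₁'
          · exact hMpd e₁ h₁' e₂ h₂' hne12
        have := hMmax _ hins
        rw [card_insert_of_notMem hsM] at this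
        omega
      have hWcard : W.card ≤ M.card * (b + 1) := by
        calc W.card ≤ ∑ e ∈ M, (id e).card := card_biUnion_le
        _ ≤ ∑ _e ∈ M, (b+1) := Finset.sum_le_sum (fun e he => hcard e (hMS he))
        _ = M.card * (b+1) := by rw [Finset.sum_const, smul_eq_mul]
      -- pigeonhole: some x in many sets
      have hpig : ∃ x ∈ W, sunBound t b + 1 < (S.filter (fun s => x ∈ s)).card := by
        by_contra hcon
        push_neg at hcon
        have hsub : S ⊆ W.biUnion (fun x => S.filter (fun s => x ∈ s)) := by
          intro s hs
          obtain ⟨x, hx⟩ := hmeet s hs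
          rw [mem_inter] at hx
          exact mem_biUnion.2 ⟨x, hx.2, mem_filter.2 ⟨hs, hx.1⟩⟩
        have : S.card ≤ W.card * (sunBound t b + 1) := by
          calc S.card ≤ (W.biUnion (fun x => S.filter (fun s => x ∈ s))).card := card_le_card hsub
          _ ≤ ∑ x ∈ W, (S.filter (fun s => x ∈ s)).card := card_biUnion_le
          _ ≤ ∑ _x ∈ W, (sunBound t b + 1) := Finset.sum_le_sum (fun x hx => hcon x hx)
          _ = W.card * (sunBound t b + 1) := by rw [Finset.sum_const, smul_eq_mul]
        have h2 : W.card * (sunBound t b + 1) ≤ (t * (b+1)) * (sunBound t b + 1) := by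
          apply Nat.mul_le_mul_right
          calc W.card ≤ M.card * (b+1) := hWcard
          _ ≤ t * (b+1) := Nat.mul_le_mul_right _ (le_of_lt hMt)
        have h3 : sunBound t (b+1) = t * (b+1) * (sunBound t b + 1) := rfl
        omega
      obtain ⟨x, _hxW, hxbig⟩ := hpig
      set Sx := S.filter (fun s => x ∈ s) with hSx
      set L := Sx.image (fun s => s \ {x}) with hL
      have hLcard : L.card = Sx.card := by
        apply card_image_of_injOn
        intro s₁ h₁ s₂ h₂ heq
        simp only [mem_coe] at h₁ h₂
        dsimp only at heq
        have hx₁ : x ∈ s₁ := (mem_filter.1 h₁).2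
        have hx₂ : x ∈ s₂ := (mem_filter.1 h₂).2
        rw [sdiff_singleton_eq_erase, sdiff_singleton_eq_erase] at heq
        calc s₁ = insert x (s₁.erase x) := (insert_erase hx₁).symm
        _ = insert x (s₂.erase x) := by rw [heq]
        _ = s₂ := insert_erase hx₂
      set L' := L.erase ∅ with hL'
      have hL'card : sunBound t b < L'.card := by
        have := card_erase_le (s := L) (a := (∅ : Finset V))
        have h2 : L.card - 1 ≤ L'.card := Finset.pred_card_le_card_erase
        omega
      have hL'ne : ∀ s ∈ L', s.Nonempty := by
        intro s hs
        rw [hL', mem_erase] at hs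
        exact nonempty_iff_ne_empty.2 hs.1
      have hL'card' : ∀ s ∈ L', s.card ≤ b := by
        intro s hs
        rw [hL', mem_erase, hL, mem_image] at hs
        obtain ⟨_, ⟨u, hu, rfl⟩⟩ := hs
        have hxu : x ∈ u := (mem_filter.1 hu).2
        have : (u \ {x}).card = u.card - 1 := by
          rw [card_sdiff_of_subset (by simpa using hxu)]
          simp
        have := hcard u (mem_filter.1 hu).1
        omega
      obtain ⟨K', E', hE'L, hE'card, hE'props, hE'int⟩ := ih L' hL'ne hL'card' hL'card
      -- x not in members of E'
      have hxnot : ∀ e ∈ E', x ∉ e := by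
        intro e he
        have := hE'L he
        rw [hL', mem_erase, hL, mem_image] at this
        obtain ⟨_, ⟨u, _, rfl⟩⟩ := this
        simp
      refine ⟨insert x K', E'.image (insert x ·), ?_, ?_, ?_, ?_⟩
      · intro e he
        rw [mem_image] at he
        obtain ⟨e', he', rfl⟩ := he
        have := hE'L he'
        rw [hL', mem_erase, hL, mem_image] at this
        obtain ⟨_, ⟨u, hu, rfl⟩⟩ := this
        have hxu : x ∈ u := (mem_filter.1 hu).2
        rw [sdiff_singleton_eq_erase, insert_erase hxu]
        exact (mem_filter.1 hu).1
      · rw [card_image_of_injOn, hE'card]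
        intro e₁ h₁ e₂ h₂ heq
        simp only [mem_coe] at h₁ h₂
        dsimp only at heq
        have hx₁ := hxnot e₁ h₁
        have hx₂ := hxnot e₂ h₂
        calc e₁ = (insert x e₁).erase x := by rw [erase_insert hx₁]
        _ = (insert x e₂).erase x := by rw [heq]
        _ = e₂ := erase_insert hx₂
      · intro e he
        rw [mem_image] at he
        obtain ⟨e', he', rfl⟩ := he
        obtain ⟨hsub, hne'⟩ := hE'props e' he'
        constructor
        · exact insert_subset_insert _ hsub
        · obtain ⟨y, hy⟩ := hne'
          refine ⟨y, ?_⟩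
          rw [mem_sdiff] at hy ⊢
          have hyx : y ≠ x := by
            intro h
            exact hxnot e' he' (h ▸ hy.1)
          simp [hy.1, hy.2, hyx]
      · intro e₁ h₁ e₂ h₂ hne12
        rw [mem_image] at h₁ h₂
        obtain ⟨e₁', he₁', rfl⟩ := h₁
        obtain ⟨e₂', he₂', rfl⟩ := h₂
        have hne' : e₁' ≠ e₂' := fun h => hne12 (by rw [h])
        have := hE'int e₁' he₁' e₂' he₂' hne'
        intro y hy
        rw [mem_inter, mem_insert, mem_insert] at hy
        rw [mem_insert]
        rcases hy.1 with rfl | hy1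
        · left; rfl
        · rcases hy.2 with h | hy2
          · left; exact h
          · right; exact this (mem_inter.2 ⟨hy1, hy2⟩)

lemma inj_pair_aux {V : Type*} {t : ℕ} (a b : Fin t → V)
    (hab : ∀ i j, a i ≠ b j)
    (ha : Function.Injective a) (hb : Function.Injective b) :
    ∃ q : Fin t × Fin 2 → V, Function.Injective q ∧ ∀ i, q (i, 0) = a i ∧ q (i, 1) = b i := by
  refine ⟨fun p => if p.2 = 0 then a p.1 else b p.1, ?_, ?_⟩
  · rintro ⟨i, u⟩ ⟨j, v⟩ h
    dsimp only at h
    by_cases hu : u = 0 <;> by_cases hv : v = 0 <;> simp only [hu, hv, if_true, if_false, reduceIte] at h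
    · rw [ha h, Prod.mk.injEq]
      exact ⟨rfl, by rw [hu, hv]⟩
    · exact absurd h (hab i j)
    · exact absurd h.symm (hab j i)
    · rw [hb h, Prod.mk.injEq]
      refine ⟨rfl, ?_⟩
      have h1 := u.isLt
      have h2 := v.isLt
      have h3 : u.val ≠ 0 := fun hh => hu (Fin.ext hh)
      have h4 : v.val ≠ 0 := fun hh => hv (Fin.ext hh)
      apply Fin.ext
      omega
  · intro i
    constructor
    · simp
    · simp

lemma exists_pairs {V : Type*} [DecidableEq V] (t r : ℕ) (T : Finset V) (G : Finset (Finset V))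
    (huni : ∀ e ∈ G, e.card = r) (hr : T.card + t + 1 ≤ r)
    (hbig : sunBound t r * 2 ^ T.card < G.card) :
    ∃ (E : Fin t → Finset V) (q : Fin t × Fin 2 → V),
      Function.Injective E ∧ (∀ i, E i ∈ G) ∧ Function.Injective q ∧
      ∀ p : Fin t × Fin 2, q p ∈ E p.1 ∧ q p ∉ T := by
  classical
  set S := G.image (fun e => e \ T) with hS
  -- each member of S has card between t+1 and r
  have hSmem : ∀ s ∈ S, ∃ e ∈ G, e \ T = s := by
    intro s hs; rw [hS, mem_image] at hs; obtain ⟨e, he, rfl⟩ := hs; exact ⟨e, he, rfl⟩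
  have hSlb : ∀ s ∈ S, t + 1 ≤ s.card := by
    intro s hs
    obtain ⟨e, he, rfl⟩ := hSmem s hs
    have h1 : e.card - T.card ≤ (e \ T).card := le_card_sdiff T e
    have h2 := huni e he
    omega
  have hSub : ∀ s ∈ S, s.card ≤ r := by
    intro s hs
    obtain ⟨e, he, rfl⟩ := hSmem s hs
    have := card_le_card (sdiff_subset (s := e) (t := T))
    rw [huni e he] at this; exact this
  have hSne : ∀ s ∈ S, s.Nonempty := fun s hs => card_pos.1 (by have := hSlb s hs; omega)
  -- S is large
  have hScard : sunBound t r < S.card := by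
    by_contra hcon
    push_neg at hcon
    have hinj : Set.InjOn (fun e => (e \ T, e ∩ T)) G := by
      intro e₁ h₁ e₂ h₂ heq
      dsimp only at heq
      have h1 : e₁ \ T = e₂ \ T := congrArg Prod.fst heq
      have h2 : e₁ ∩ T = e₂ ∩ T := congrArg Prod.snd heq
      calc e₁ = e₁ \ T ∪ e₁ ∩ T := (sdiff_union_inter e₁ T).symm
      _ = e₂ \ T ∪ e₂ ∩ T := by rw [h1, h2]
      _ = e₂ := sdiff_union_inter e₂ T
    have hmaps : ∀ e ∈ G, (e \ T, e ∩ T) ∈ S ×ˢ T.powerset := by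
      intro e he
      rw [mem_product]
      exact ⟨mem_image.2 ⟨e, he, rfl⟩, mem_powerset.2 inter_subset_right⟩
    have := Finset.card_le_card_of_injOn _ hmaps hinj
    rw [card_product, card_powerset] at this
    have h2 : S.card * 2 ^ T.card ≤ sunBound t r * 2 ^ T.card :=
      Nat.mul_le_mul_right _ hcon
    omega
  obtain ⟨K, E', hE'S, hE'card, hE'props, hE'int⟩ := sunflower_lemma t r S hSne hSub hScard
  -- enumerate E'
  set sf : Fin t → Finset V := fun i => (E'.equivFin.symm (Fin.cast hE'card.symm i) : Finset V)
    with hsf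
  have hsfinj : Function.Injective sf := by
    intro i j h
    rw [hsf] at h
    dsimp only at h
    have := E'.equivFin.symm.injective (Subtype.val_injective h)
    exact Fin.cast_injective _ this
  have hsfmem : ∀ i, sf i ∈ E' := fun i => (E'.equivFin.symm (Fin.cast hE'card.symm i)).2
  -- pick the two vertices in each petal/core
  have hpetal : ∀ i, (sf i \ K).Nonempty := fun i => (hE'props _ (hsfmem i)).2
  have hKsub : ∀ i, K ⊆ sf i := fun i => (hE'props _ (hsfmem i)).1
  have hdisj : ∀ i j : Fin t, i ≠ j → ∀ y, y ∈ sf i \ K → y ∈ sf j \ K → False := by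
    intro i j hij y hyi hyj
    rw [mem_sdiff] at hyi hyj
    have hne : sf i ≠ sf j := fun h => hij (hsfinj h)
    exact hyi.2 (hE'int _ (hsfmem i) _ (hsfmem j) hne (mem_inter.2 ⟨hyi.1, hyj.1⟩))
  have main : ∃ q : Fin t × Fin 2 → V, Function.Injective q ∧ ∀ p : Fin t × Fin 2, q p ∈ sf p.1 := by
    by_cases hK : t ≤ K.card
    · -- use core vertices and one petal vertex each
      set c : Fin t → V := fun i => (K.equivFin.symm (Fin.castLE hK i) : V) with hc
      have hcinj : Function.Injective c := by
        intro i j h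
        rw [hc] at h
        dsimp only at h
        have := K.equivFin.symm.injective (Subtype.val_injective h)
        exact Fin.castLE_injective _ this
      have hcK : ∀ i, c i ∈ K := fun i => (K.equivFin.symm (Fin.castLE hK i)).2
      choose a ha using hpetal
      have hau : ∀ i, a i ∉ K := fun i => (mem_sdiff.1 (ha i)).2
      have hainj : Function.Injective a := by
        intro i j h
        by_contra hij
        exact hdisj i j hij (a i) (ha i) (h ▸ ha j)
      obtain ⟨q, hqinj, hq⟩ := inj_pair_aux c a (fun i j hh => hau j (hh ▸ hcK i)) hcinj hainj
      refine ⟨q, hqinj, ?_⟩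
      rintro ⟨i, u⟩
      fin_cases u
      · exact ((hq i).1).symm ▸ hKsub i (hcK i)
      · exact ((hq i).2).symm ▸ (mem_sdiff.1 (ha i)).1
    · -- petals have ≥ 2 elements
      push_neg at hK
      have hpetal2 : ∀ i, 1 < (sf i \ K).card := by
        intro i
        have h1 := card_le_card (sdiff_subset (s := sf i) (t := K))
        have h2 : (sf i).card - K.card ≤ (sf i \ K).card := le_card_sdiff K (sf i)
        have h3 : t + 1 ≤ (sf i).card := hSlb _ (hE'S (hsfmem i))
        omega
      have hch : ∀ i : Fin t, ∃ p : V × V, p.1 ∈ sf i \ K ∧ p.2 ∈ sf i \ K ∧ p.1 ≠ p.2 := by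
        intro i
        obtain ⟨a, ha, b, hb, hab⟩ := Finset.one_lt_card.1 (hpetal2 i)
        exact ⟨(a, b), ha, hb, hab⟩
      choose p hp1 hp2 hp3 using hch
      have hne_idx : ∀ (i j : Fin t) (y : V), y ∈ sf i \ K → y ∈ sf j \ K → i = j := by
        intro i j y hy1 hy2
        by_contra hij
        exact hdisj i j hij y hy1 hy2
      have h1inj : Function.Injective (fun i => (p i).1) := by
        intro i j h
        dsimp only at h
        exact hne_idx i j (p i).1 (hp1 i) (h ▸ hp1 j)
      have h2inj : Function.Injective (fun i => (p i).2) := by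
        intro i j h
        dsimp only at h
        exact hne_idx i j (p i).2 (hp2 i) (h ▸ hp2 j)
      have hab : ∀ i j, (p i).1 ≠ (p j).2 := by
        intro i j h
        have hij : i = j := hne_idx i j (p i).1 (hp1 i) (h ▸ hp2 j)
        exact hp3 i (hij ▸ h)
      obtain ⟨q, hqinj, hq⟩ := inj_pair_aux (fun i => (p i).1) (fun i => (p i).2) hab h1inj h2inj
      refine ⟨q, hqinj, ?_⟩
      rintro ⟨i, u⟩
      fin_cases u
      · exact ((hq i).1).symm ▸ (mem_sdiff.1 (hp1 i)).1
      · exact ((hq i).2).symm ▸ (mem_sdiff.1 (hp2 i)).1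
  obtain ⟨q, hqinj, hqmem⟩ := main
  -- lift back to G
  have hlift : ∀ i : Fin t, ∃ e ∈ G, e \ T = sf i := fun i => hSmem _ (hE'S (hsfmem i))
  choose E hEG hET using hlift
  refine ⟨E, q, ?_, hEG, hqinj, ?_⟩
  · intro i j h
    exact hsfinj (by rw [← hET i, h, hET j])
  · intro pp
    have h1 := hqmem pp
    rw [← hET pp.1, mem_sdiff] at h1
    exact ⟨h1.1, h1.2⟩


-- sum graph adjacency helpers
lemma sum_adj_cases {α β : Type*} {F : SimpleGraph α} {M : SimpleGraph β} {x y : α ⊕ β}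
    (h : (F.sum M).Adj x y) :
    (∃ a b, x = Sum.inl a ∧ y = Sum.inl b ∧ F.Adj a b) ∨
    (∃ p p', x = Sum.inr p ∧ y = Sum.inr p' ∧ M.Adj p p') := by
  cases x with
  | inl a => cases y with
    | inl b => exact Or.inl ⟨a, b, rfl, rfl, h⟩
    | inr p => exact absurd h (by simp [SimpleGraph.sum])
  | inr p => cases y with
    | inl b => exact absurd h (by simp [SimpleGraph.sum])
    | inr p' => exact Or.inr ⟨p, p', rfl, rfl, h⟩

lemma sum_adj_inl {α β : Type*} {F : SimpleGraph α} {M : SimpleGraph β} {a b : α}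
    (h : F.Adj a b) : (F.sum M).Adj (Sum.inl a) (Sum.inl b) := h

lemma sum_adj_inr {α β : Type*} {F : SimpleGraph α} {M : SimpleGraph β} {p p' : β}
    (h : M.Adj p p') : (F.sum M).Adj (Sum.inr p) (Sum.inr p') := h

lemma map_inl_edge {α β : Type*} (F : SimpleGraph α) (M : SimpleGraph β) {e : Sym2 α}
    (he : e ∈ F.edgeSet) : Sym2.map Sum.inl e ∈ (F.sum M).edgeSet := by
  induction e with
  | _ x y =>
    rw [Sym2.map_pair_eq, SimpleGraph.mem_edgeSet] at *
    exact sum_adj_inl he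

lemma berge_of_berge_sum {α β V : Type*} (F : SimpleGraph α) (M : SimpleGraph β)
    (H : Finset (Finset V)) (h : IsBergeCopy (F.sum M) H) : IsBergeCopy F H := by
  obtain ⟨f, φ, hf, hφ, hmem⟩ := h
  refine ⟨f ∘ Sum.inl, φ ∘ Sym2.map Sum.inl, hf.comp Sum.inl_injective, ?_, ?_⟩
  · intro e₁ h₁ e₂ h₂ heq
    have := hφ (map_inl_edge F M h₁) (map_inl_edge F M h₂) heq
    exact Sym2.map.injective Sum.inl_injective this
  · intro e he
    obtain ⟨h1, h2⟩ := hmem _ (map_inl_edge F M he)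
    exact ⟨h1, fun x hx => h2 (Sum.inl x) (Sym2.mem_map.2 ⟨x, hx, rfl⟩)⟩

lemma not_berge_empty {α V : Type*} (F : SimpleGraph α) (hedge : F.edgeSet.Nonempty) :
    ¬ IsBergeCopy F (∅ : Finset (Finset V)) := by
  rintro ⟨f, φ, -, -, hmem⟩
  obtain ⟨e, he⟩ := hedge
  exact absurd (hmem e he).1 (by simp)

lemma exBerge_zero_mem {α : Type*} (r n : ℕ) (F : SimpleGraph α) (hedge : F.edgeSet.Nonempty) :
    0 ∈ {m | ∃ H : Finset (Finset (Fin n)),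
      (∀ e ∈ H, e.card = r) ∧ ¬ IsBergeCopy F H ∧ H.card = m} :=
  ⟨∅, by simp, not_berge_empty F hedge, rfl⟩

lemma exBerge_bdd {α : Type*} (r n : ℕ) (F : SimpleGraph α) :
    BddAbove {m | ∃ H : Finset (Finset (Fin n)),
      (∀ e ∈ H, e.card = r) ∧ ¬ IsBergeCopy F H ∧ H.card = m} := by
  refine ⟨2 ^ n, ?_⟩
  rintro m ⟨H, -, -, rfl⟩
  calc H.card ≤ (univ : Finset (Finset (Fin n))).card := card_le_univ H
  _ = 2 ^ n := by rw [card_univ, Fintype.card_finset, Fintype.card_fin]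

lemma le_exBerge {α : Type*} {r n : ℕ} {F : SimpleGraph α} {H : Finset (Finset (Fin n))}
    (huni : ∀ e ∈ H, e.card = r) (hnb : ¬ IsBergeCopy F H) : H.card ≤ exBerge r n F :=
  le_csSup (exBerge_bdd r n F) ⟨H, huni, hnb, rfl⟩

lemma exBerge_lower {α : Type*} (F : SimpleGraph α)
    (hnm : ∃ v a b, a ≠ b ∧ F.Adj v a ∧ F.Adj v b) (r n : ℕ) (hr : 1 ≤ r) :
    n / r ≤ exBerge r n F := by
  rcases Nat.eq_zero_or_pos n with rfl | hn
  · simp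
  -- the perfect matching hypergraph
  have hlt : ∀ i j : ℕ, i < n / r → j < r → i * r + j < n := by
    intro i j hi hj
    have h1 : (i + 1) * r ≤ (n / r) * r := Nat.mul_le_mul_right r hi
    have h2 : (n / r) * r ≤ n := Nat.div_mul_le_self n r
    have h3 : (i + 1) * r = i * r + r := by ring
    omega
  set ed : ℕ → Finset (Fin n) :=
    fun i => (range r).image (fun j => (⟨(i * r + j) % n, Nat.mod_lt _ hn⟩ : Fin n)) with hed
  have hmem_ed : ∀ i : ℕ, i < n / r → ∀ x : Fin n, x ∈ ed i ↔ ∃ j < r, (x : ℕ) = i * r + j := by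
    intro i hi x
    rw [hed]
    simp only [mem_image, mem_range]
    constructor
    · rintro ⟨j, hj, rfl⟩
      exact ⟨j, hj, by simp [Nat.mod_eq_of_lt (hlt i j hi hj)]⟩
    · rintro ⟨j, hj, hx⟩
      refine ⟨j, hj, ?_⟩
      apply Fin.ext
      simp [Nat.mod_eq_of_lt (hlt i j hi hj), hx]
  have key : ∀ i i' j j' : ℕ, j < r → j' < r → i * r + j = i' * r + j' → i = i' := by
    intro i i' j j' hj hj' heq
    rcases lt_trichotomy i i' with h | h | h
    · exfalso
      have h1 : (i + 1) * r ≤ i' * r := Nat.mul_le_mul_right r h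
      have h3 : (i + 1) * r = i * r + r := by ring
      omega
    · exact h
    · exfalso
      have h1 : (i' + 1) * r ≤ i * r := Nat.mul_le_mul_right r h
      have h3 : (i' + 1) * r = i' * r + r := by ring
      omega
  have hdisj : ∀ i i', i < n / r → i' < n / r → i ≠ i' → ∀ x, x ∈ ed i → x ∈ ed i' → False := by
    intro i i' hi hi' hne x hx hx'
    rw [hmem_ed i hi] at hx
    rw [hmem_ed i' hi'] at hx'
    obtain ⟨j, hj, hxj⟩ := hx
    obtain ⟨j', hj', hxj'⟩ := hx'
    exact hne (key i i' j j' hj hj' (by omega))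
  set H0 : Finset (Finset (Fin n)) := (range (n / r)).image ed with hH0
  have hcardH0 : H0.card = n / r := by
    rw [hH0, card_image_of_injOn, card_range]
    intro i hi i' hi' heq
    rw [mem_coe, mem_range] at hi hi'
    by_contra hne
    have hx : (⟨(i * r) % n, Nat.mod_lt _ hn⟩ : Fin n) ∈ ed i := by
      rw [hmem_ed i hi]
      exact ⟨0, hr, by simp [Nat.mod_eq_of_lt (by have := hlt i 0 hi hr; omega : i * r < n)]⟩
    exact hdisj i i' hi hi' hne _ hx (heq ▸ hx)
  have huni : ∀ e ∈ H0, e.card = r := by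
    intro e he
    rw [hH0, mem_image] at he
    obtain ⟨i, hi, rfl⟩ := he
    rw [mem_range] at hi
    rw [hed]
    rw [card_image_of_injOn, card_range]
    intro j hj j' hj' heq
    rw [mem_coe, mem_range] at hj hj'
    have := congrArg Fin.val heq
    simp only [Nat.mod_eq_of_lt (hlt i j hi hj), Nat.mod_eq_of_lt (hlt i j' hi hj')] at this
    omega
  have hnb : ¬ IsBergeCopy F H0 := by
    rintro ⟨f, φ, hf, hφ, hmem⟩
    obtain ⟨v, a, b, hab, hva, hvb⟩ := hnm
    have he1 : s(v, a) ∈ F.edgeSet := hva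
    have he2 : s(v, b) ∈ F.edgeSet := hvb
    have hne12 : s(v, a) ≠ s(v, b) := by
      intro h
      rw [Sym2.eq_iff] at h
      rcases h with ⟨-, h⟩ | ⟨h1, h2⟩
      · exact hab h
      · exact hab (h2.trans h1)
    have hφne : φ s(v, a) ≠ φ s(v, b) := fun h => hne12 (hφ he1 he2 h)
    obtain ⟨hm1, hv1⟩ := hmem _ he1
    obtain ⟨hm2, hv2⟩ := hmem _ he2
    have hfv1 : f v ∈ φ s(v, a) := hv1 v (Sym2.mem_mk_left v a)
    have hfv2 : f v ∈ φ s(v, b) := hv2 v (Sym2.mem_mk_left v b)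
    rw [hH0, mem_image] at hm1 hm2
    obtain ⟨i, hi, h1⟩ := hm1
    obtain ⟨i', hi', h2⟩ := hm2
    rw [mem_range] at hi hi'
    have hii' : i ≠ i' := by
      rintro rfl
      exact hφne (h1.symm.trans h2)
    exact hdisj i i' hi hi' hii' (f v) (h1 ▸ hfv1) (h2 ▸ hfv2)
  calc n / r = H0.card := hcardH0.symm
  _ ≤ exBerge r n F := le_exBerge huni hnb

theorem ex_berge_union_matching_eq_of_not_matching {α : Type*} [Fintype α]
    (F : SimpleGraph α) (k r : ℕ) (hk : 2 ≤ k) (hr : k + Fintype.card α ≤ r)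
    (hedge : F.edgeSet.Nonempty)
    (hnotmatching : ∃ v a b, a ≠ b ∧ F.Adj v a ∧ F.Adj v b) :
    ∃ N, ∀ n ≥ N,
      exBerge r n (F.sum (matchingG (k - 1))) = exBerge r n F := by
  classical
  set t := k - 1 with ht
  set CA := Fintype.card (Sym2 α) with hCA
  refine ⟨r * (sunBound t r * 2 ^ Fintype.card α + CA + 2), fun n hn => ?_⟩
  have hr1 : 1 ≤ r := by omega
  have hedge2 : (F.sum (matchingG t)).edgeSet.Nonempty := by
    obtain ⟨e, he⟩ := hedge
    exact ⟨Sym2.map Sum.inl e, map_inl_edge F (matchingG t) he⟩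
  -- direction A : exBerge F ≤ exBerge sum
  have hA : exBerge r n F ≤ exBerge r n (F.sum (matchingG t)) := by
    apply csSup_le_csSup (exBerge_bdd r n _) ⟨0, exBerge_zero_mem r n F hedge⟩
    rintro m ⟨H, huni, hnb, rfl⟩
    exact ⟨H, huni, fun h => hnb (berge_of_berge_sum F _ H h), rfl⟩
  -- direction B
  have hB : exBerge r n (F.sum (matchingG t)) ≤ exBerge r n F := by
    obtain ⟨H, hHuni, hHnb, hHcard⟩ :=
      Nat.sSup_mem ⟨0, exBerge_zero_mem r n _ hedge2⟩ (exBerge_bdd r n (F.sum (matchingG t)))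
    have hHcard' : H.card = exBerge r n (F.sum (matchingG t)) := hHcard
    rw [← hHcard']
    by_cases hc : IsBergeCopy F H
    · -- derive a Berge copy of the sum, contradiction
      exfalso
      obtain ⟨f, φ, hf, hφ, hmem⟩ := hc
      set T : Finset (Fin n) := univ.image f with hT
      set Φ : Finset (Finset (Fin n)) := (univ : Finset (Sym2 α)).image φ with hΦ
      set G : Finset (Finset (Fin n)) := H \ Φ with hG
      have hTcard : T.card ≤ Fintype.card α := by
        calc T.card ≤ (univ : Finset α).card := card_image_le
        _ = Fintype.card α := card_univ
      have hΦcard : Φ.card ≤ CA := by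
        calc Φ.card ≤ (univ : Finset (Sym2 α)).card := card_image_le
        _ = CA := card_univ
      -- H is big
      have hHbig : sunBound t r * 2 ^ Fintype.card α + CA + 2 ≤ H.card := by
        have h1 : sunBound t r * 2 ^ Fintype.card α + CA + 2 ≤ n / r := by
          rw [Nat.le_div_iff_mul_le (by omega : 0 < r)]
          calc (sunBound t r * 2 ^ Fintype.card α + CA + 2) * r
              = r * (sunBound t r * 2 ^ Fintype.card α + CA + 2) := by ring
          _ ≤ n := hn
        calc sunBound t r * 2 ^ Fintype.card α + CA + 2 ≤ n / r := h1
        _ ≤ exBerge r n F := exBerge_lower F hnotmatching r n hr1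
        _ ≤ exBerge r n (F.sum (matchingG t)) := hA
        _ = H.card := hHcard.symm
      have hGcard : sunBound t r * 2 ^ T.card < G.card := by
        have h1 : H.card - Φ.card ≤ G.card := le_card_sdiff Φ H
        have h2 : sunBound t r * 2 ^ T.card ≤ sunBound t r * 2 ^ Fintype.card α :=
          Nat.mul_le_mul_left _ (Nat.pow_le_pow_right (by omega) hTcard)
        omega
      have hGuni : ∀ e ∈ G, e.card = r := fun e he => hHuni e (mem_sdiff.1 he).1
      have hrT : T.card + t + 1 ≤ r := by omega
      obtain ⟨E, q, hEinj, hEG, hqinj, hq⟩ := exists_pairs t r T G hGuni hrT hGcard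
      -- assemble the Berge copy of the sum graph
      set f'' : α ⊕ (Fin t × Fin 2) → Fin n := Sum.elim f q with hf''
      set φ'' : Sym2 (α ⊕ (Fin t × Fin 2)) → Finset (Fin n) :=
        Sym2.lift ⟨fun x y => match x, y with
          | Sum.inl a, Sum.inl b => φ s(a, b)
          | Sum.inl _, Sum.inr p => E p.1
          | Sum.inr p, Sum.inl _ => E p.1
          | Sum.inr p, Sum.inr p' => E (min p.1 p'.1), by
            intro x y
            cases x <;> cases y <;> dsimp only
            · rw [Sym2.eq_swap]
            · rw [min_comm]⟩ with hφ''
      have hφll : ∀ a b : α, φ'' s(Sum.inl a, Sum.inl b) = φ s(a, b) := fun a b => Sym2.lift_mk _ _ _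
      have hφrr : ∀ p p' : Fin t × Fin 2, φ'' s(Sum.inr p, Sum.inr p') = E (min p.1 p'.1) :=
        fun p p' => Sym2.lift_mk _ _ _
      have hqT : ∀ p, q p ∉ T := fun p => (hq p).2
      have hqE : ∀ p : Fin t × Fin 2, q p ∈ E p.1 := fun p => (hq p).1
      have hf''inj : Function.Injective f'' := by
        rintro (a | p) (b | p') h <;> rw [hf''] at h <;> dsimp only [Sum.elim_inl, Sum.elim_inr] at h
        · rw [hf h]
        · exact absurd (mem_image.2 ⟨a, mem_univ a, h⟩) (hqT p')
        · exact absurd (mem_image.2 ⟨b, mem_univ b, h.symm⟩) (hqT p)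
        · rw [hqinj h]
      -- edges of the matching part: canonical form
      have hmadj : ∀ p p' : Fin t × Fin 2, (matchingG t).Adj p p' → p ≠ p' ∧ p.1 = p'.1 := by
        intro p p' h
        rw [matchingG, SimpleGraph.fromRel_adj] at h
        exact ⟨h.1, h.2.elim id Eq.symm⟩
      have hEH : ∀ i, E i ∈ H := fun i => (mem_sdiff.1 (hEG i)).1
      have hEnΦ : ∀ i, E i ∉ Φ := fun i => (mem_sdiff.1 (hEG i)).2
      -- main membership conditions
      have hcond : ∀ e ∈ (F.sum (matchingG t)).edgeSet, φ'' e ∈ H ∧ ∀ x ∈ e, f'' x ∈ φ'' e := by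
        intro e he
        induction e with
        | _ x y =>
          rw [SimpleGraph.mem_edgeSet] at he
          rcases sum_adj_cases he with ⟨a, b, rfl, rfl, hab⟩ | ⟨p, p', rfl, rfl, hpp⟩
          · have heF : s(a, b) ∈ F.edgeSet := hab
            obtain ⟨h1, h2⟩ := hmem _ heF
            rw [hφll]
            refine ⟨h1, ?_⟩
            intro x hx
            rw [Sym2.mem_iff] at hx
            rcases hx with rfl | rfl
            · exact h2 a (Sym2.mem_mk_left a b)
            · exact h2 b (Sym2.mem_mk_right a b)
          · obtain ⟨hne, hfst⟩ := hmadj p p' hpp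
            rw [hφrr, hfst, min_self]
            refine ⟨hEH p'.1, ?_⟩
            intro x hx
            rw [Sym2.mem_iff] at hx
            rcases hx with rfl | rfl
            · exact hfst ▸ hqE p
            · exact hqE p'
      -- injectivity of φ'' on the edge set
      have hφinj : Set.InjOn φ'' (F.sum (matchingG t)).edgeSet := by
        have hcanon : ∀ p p' : Fin t × Fin 2, p ≠ p' → p.1 = p'.1 →
            s(Sum.inr p, Sum.inr p') =
              (s(Sum.inr (p.1, 0), Sum.inr (p.1, 1)) : Sym2 (α ⊕ (Fin t × Fin 2))) := by
          rintro ⟨i, u⟩ ⟨i', v⟩ hne hfst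
          dsimp only at hfst
          subst hfst
          have huv : u ≠ v := by
            intro h
            exact hne (by rw [h])
          fin_cases u <;> fin_cases v
          · exact absurd rfl huv
          · rfl
          · exact Sym2.eq_swap
          · exact absurd rfl huv
        intro e₁ he₁ e₂ he₂ heq
        induction e₁ with
        | _ x y =>
          induction e₂ with
          | _ x' y' =>
            rw [SimpleGraph.mem_edgeSet] at he₁ he₂
            rcases sum_adj_cases he₁ with ⟨a, b, rfl, rfl, hab⟩ | ⟨p, p', rfl, rfl, hpp⟩ <;>
              rcases sum_adj_cases he₂ with ⟨c, d, rfl, rfl, hcd⟩ | ⟨w, w', rfl, rfl, hww⟩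
            · rw [hφll, hφll] at heq
              have h1 : s(a, b) = s(c, d) := hφ hab hcd heq
              have := congrArg (Sym2.map (Sum.inl : α → α ⊕ (Fin t × Fin 2))) h1
              rwa [Sym2.map_pair_eq, Sym2.map_pair_eq] at this
            · exfalso
              rw [hφll, hφrr] at heq
              exact hEnΦ (min w.1 w'.1) (heq ▸ mem_image.2 ⟨s(a, b), mem_univ _, rfl⟩)
            · exfalso
              rw [hφll, hφrr] at heq
              exact hEnΦ (min p.1 p'.1) (heq.symm ▸ mem_image.2 ⟨s(c, d), mem_univ _, rfl⟩)
            · obtain ⟨hne1, hfst1⟩ := hmadj p p' hpp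
              obtain ⟨hne2, hfst2⟩ := hmadj w w' hww
              rw [hφrr, hφrr, hfst1, hfst2, min_self, min_self] at heq
              have hi : p'.1 = w'.1 := hEinj heq
              rw [hcanon p p' hne1 hfst1, hcanon w w' hne2 hfst2, hfst1, hfst2, hi]
      exact hHnb ⟨f'', φ'', hf''inj, hφinj, hcond⟩
    · exact le_exBerge hHuni hc
  exact le_antisymm hB hA
end
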